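/- arXiv:0907.4412 — 7 statements merged into one kernel-verified Lean document; each statement's English description precedes it below -/
import Mathlib

section
/- If x ∈ R is homogeneous of weight w and homogeneous of dimension d, then Q(x) is homogeneous of weight 2w and homogeneous of dimension 2d + 1 (vacuously if Q(x) = 0). -/
open MvPolynomial TensorProduct

/-- The field 𝔽₂. -/
abbrev F2 : Type := ZMod 2

/-- The polynomial ring `𝔽₂[X 0, X 1, X 2, …]`, used as a model both for
`H_*(∐ₖ Ratₖ; 𝔽₂) = 𝔽₂[g, g⁻¹Qg, Q(g⁻¹Qg), …]` (the "R" model, where `X 0 = g` and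
`X (i+1) = Qⁱ(g⁻¹Qg)`) and for `H_*(∐ₙ Bβₙ; 𝔽₂) = 𝔽₂[g, Qg, Q²g, …]`
(the "B" model, where `X i = Qⁱg`). -/
abbrev P : Type := MvPolynomial ℕ F2

/-- Weight of the variable `X i` in the braid model `B`: `wt(Qⁱg) = 2^i`. -/
def wB : ℕ → ℕ := fun i => 2 ^ i

/-- Dimension of the variable `X i` in the braid model `B`: `dim(Qⁱg) = 2^i - 1`. -/
def dB : ℕ → ℕ := fun i => 2 ^ i - 1

/-- Weight of the variable `X i` in the Rat model `R`: `wt(g) = 1`,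
`wt(Qⁱ(g⁻¹Qg)) = 2^i`. -/
def wR : ℕ → ℕ := fun i => match i with
  | 0 => 1
  | j + 1 => 2 ^ j

/-- Dimension of the variable `X i` in the Rat model `R`: `dim(g) = 0`,
`dim(Qⁱ(g⁻¹Qg)) = 2^(i+1) - 1`. -/
def dR : ℕ → ℕ := fun i => match i with
  | 0 => 0
  | j + 1 => 2 ^ (j + 1) - 1

/-- The weight (resp. dimension) of a monomial with exponent vector `m`: the sum,
with multiplicity, of the weights (resp. dimensions) `w i` of its variables. -/
def mwt (w : ℕ → ℕ) (m : ℕ →₀ ℕ) : ℕ := m.sum fun i e => e * w i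

/-- A polynomial is homogeneous of weight (resp. dimension) `n` with respect to the
variable-weight function `w` if every monomial in its support has weight
(resp. dimension) `n`. -/
def Homog (w : ℕ → ℕ) (n : ℕ) (x : P) : Prop := ∀ m ∈ x.support, mwt w m = n

/-- The 𝔽₂-linear span of the monomials of weight `n`. -/
noncomputable def spanWt (w : ℕ → ℕ) (n : ℕ) : Submodule F2 P :=
  Submodule.span F2 {p : P | ∃ m : ℕ →₀ ℕ, mwt w m = n ∧ p = monomial m 1}

/-- The image `N ⊗ M` inside `P ⊗ P` of two submodules `N, M ⊆ P`. -/
noncomputable def tensorSub (N M : Submodule F2 P) : Submodule F2 (P ⊗[F2] P) :=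
  Submodule.span F2 {t : P ⊗[F2] P | ∃ a ∈ N, ∃ b ∈ M, t = a ⊗ₜ[F2] b}

/-- `Q` is the Araki–Kudo operation on the Rat model: the 𝔽₂-linear map with
`Q(X 0) = X 0 · X 1`, `Q(X (i+1)) = X (i+2)`, and the Cartan formula
`Q(uv) = u²Q(v) + Q(u)v²`. -/
def IsQ (Q : P →ₗ[F2] P) : Prop :=
  Q (X 0) = X 0 * X 1 ∧ (∀ i : ℕ, Q (X (i + 1)) = X (i + 2)) ∧
    ∀ u v : P, Q (u * v) = u ^ 2 * Q v + Q u * v ^ 2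

/-- `ψ` is the coproduct on the braid model `B`: the 𝔽₂-algebra map with
`ψ(g) = g ⊗ g` and `ψ(Qⁱg) = g^(2^i) ⊗ Qⁱg + Qⁱg ⊗ g^(2^i)` for `i ≥ 1`. -/
def IsPsiB (ψ : P →ₐ[F2] P ⊗[F2] P) : Prop :=
  ψ (X 0) = X 0 ⊗ₜ[F2] X 0 ∧
    ∀ i : ℕ, 1 ≤ i →
      ψ (X i) = ((X 0) ^ (2 ^ i)) ⊗ₜ[F2] (X i) + (X i) ⊗ₜ[F2] ((X 0) ^ (2 ^ i))

/-- `ψ` is the coproduct on the Rat model `R` (with Araki–Kudo operation `Q`):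
the 𝔽₂-algebra map with `ψ(g) = g ⊗ g`, `ψ(g⁻¹Qg) = g ⊗ g⁻¹Qg + g⁻¹Qg ⊗ g`, and
`ψ(Qⁱ(g⁻¹Qg)) = g^(2^i) ⊗ Qⁱ(g⁻¹Qg) + Qⁱg ⊗ (g⁻¹Qg)^(2^i) + (g⁻¹Qg)^(2^i) ⊗ Qⁱg
+ Qⁱ(g⁻¹Qg) ⊗ g^(2^i)` for `i ≥ 1`, where `Qⁱg = Qⁱ(X 0)`. -/
def IsPsiR (Q : P →ₗ[F2] P) (ψ : P →ₐ[F2] P ⊗[F2] P) : Prop :=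
  ψ (X 0) = X 0 ⊗ₜ[F2] X 0 ∧
  ψ (X 1) = X 0 ⊗ₜ[F2] X 1 + X 1 ⊗ₜ[F2] X 0 ∧
  ∀ i : ℕ, 1 ≤ i →
    ψ (X (i + 1)) =
      ((X 0) ^ (2 ^ i)) ⊗ₜ[F2] (X (i + 1))
      + ((⇑Q)^[i] (X 0)) ⊗ₜ[F2] ((X 1) ^ (2 ^ i))
      + ((X 1) ^ (2 ^ i)) ⊗ₜ[F2] ((⇑Q)^[i] (X 0))
      + (X (i + 1)) ⊗ₜ[F2] ((X 0) ^ (2 ^ i))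

/-- `π` is the family of projections: `π s` is the 𝔽₂-linear endomorphism fixing
every monomial of dimension `s` (with respect to the variable-dimension function
`dimv`) and annihilating every monomial of other dimensions. -/
def IsPi (dimv : ℕ → ℕ) (π : ℕ → P →ₗ[F2] P) : Prop :=
  ∀ (s : ℕ) (m : ℕ →₀ ℕ) (c : F2),
    π s (monomial m c) = if mwt dimv m = s then monomial m c else 0

-- Auxiliary lemmas for arakiKudo_homog

lemma mwt_eq_weight (w : ℕ → ℕ) (m : ℕ →₀ ℕ) : mwt w m = Finsupp.weight w m := by
  simp [mwt, Finsupp.weight_apply, smul_eq_mul]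

lemma homog_iff_isWH (w : ℕ → ℕ) (n : ℕ) (x : P) :
    Homog w n x ↔ x.IsWeightedHomogeneous w n := by
  constructor
  · intro h d hd
    rw [← mwt_eq_weight]
    exact h d (by simpa [MvPolynomial.mem_support_iff] using hd)
  · intro h m hm
    rw [mwt_eq_weight]
    exact h (by simpa [MvPolynomial.mem_support_iff] using hm)

lemma mwt_add (w : ℕ → ℕ) (a b : ℕ →₀ ℕ) : mwt w (a + b) = mwt w a + mwt w b := by
  simp [mwt_eq_weight, map_add]

lemma mwt_single (w : ℕ → ℕ) (i e : ℕ) : mwt w (Finsupp.single i e) = e * w i := by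
  simp [mwt, Finsupp.sum_single_index]


lemma isWH_pow {w : ℕ → ℕ} {p : P} {n : ℕ} (h : p.IsWeightedHomogeneous w n) (e : ℕ) :
    (p ^ e).IsWeightedHomogeneous w (e * n) := by
  induction e with
  | zero => simpa using isWeightedHomogeneous_one F2 w
  | succ e ih =>
    have := ih.mul h
    rw [← pow_succ] at this
    have harith : e * n + n = (e + 1) * n := by ring
    rwa [harith] at this

lemma isWH_sq {w : ℕ → ℕ} {p : P} {n : ℕ} (h : p.IsWeightedHomogeneous w n) :
    (p ^ 2).IsWeightedHomogeneous w (2 * n) := by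
  rw [sq, two_mul]; exact h.mul h

lemma Q_one {Q : P →ₗ[F2] P} (hQ : IsQ Q) : Q 1 = 0 := by
  have h := hQ.2.2 1 1
  simp only [one_mul, mul_one, one_pow] at h
  have : Q 1 + Q 1 = Q 1 + 0 := by rw [add_zero, ← h]
  exact (add_left_cancel this)

lemma Q_X_homog {Q : P →ₗ[F2] P} (hQ : IsQ Q) (i : ℕ) :
    (Q (X i)).IsWeightedHomogeneous wR (2 * wR i) ∧
      (Q (X i)).IsWeightedHomogeneous dR (2 * dR i + 1) := by
  obtain ⟨h0, hS, _⟩ := hQ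
  cases i with
  | zero =>
    rw [h0]
    constructor
    · have := (isWeightedHomogeneous_X F2 wR 0).mul (isWeightedHomogeneous_X F2 wR 1)
      simpa [wR] using this
    · have := (isWeightedHomogeneous_X F2 dR 0).mul (isWeightedHomogeneous_X F2 dR 1)
      simpa [dR] using this
  | succ j =>
    rw [hS j]
    constructor
    · have := isWeightedHomogeneous_X F2 wR (j + 2)
      have hw : wR (j + 2) = 2 * wR (j + 1) := by simp [wR, pow_succ]; ring
      rwa [hw] at this
    · have := isWeightedHomogeneous_X F2 dR (j + 2)
      have hd : dR (j + 2) = 2 * dR (j + 1) + 1 := by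
        simp only [dR]
        have h1 : (1 : ℕ) ≤ 2 ^ (j + 1) := Nat.one_le_two_pow
        have h2 : (1 : ℕ) ≤ 2 ^ (j + 2) := Nat.one_le_two_pow
        rw [pow_succ 2 (j + 1)]
        omega
      rwa [hd] at this

lemma Q_Xpow_homog {Q : P →ₗ[F2] P} (hQ : IsQ Q) (i e : ℕ) :
    (Q (X i ^ e)).IsWeightedHomogeneous wR (2 * (e * wR i)) ∧
      (Q (X i ^ e)).IsWeightedHomogeneous dR (2 * (e * dR i) + 1) := by
  induction e with
  | zero =>
    simp only [pow_zero, Q_one hQ]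
    exact ⟨isWeightedHomogeneous_zero _ _ _, isWeightedHomogeneous_zero _ _ _⟩
  | succ e ih =>
    have hc := hQ.2.2 (X i) (X i ^ e)
    rw [← pow_succ'] at hc
    rw [hc]
    have hX2w : ((X i : P) ^ 2).IsWeightedHomogeneous wR (2 * wR i) :=
      isWH_sq (isWeightedHomogeneous_X F2 wR i)
    have hX2d : ((X i : P) ^ 2).IsWeightedHomogeneous dR (2 * dR i) :=
      isWH_sq (isWeightedHomogeneous_X F2 dR i)
    have hXe2w : (((X i : P) ^ e) ^ 2).IsWeightedHomogeneous wR (2 * (e * wR i)) :=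
      isWH_sq (isWH_pow (isWeightedHomogeneous_X F2 wR i) e)
    have hXe2d : (((X i : P) ^ e) ^ 2).IsWeightedHomogeneous dR (2 * (e * dR i)) :=
      isWH_sq (isWH_pow (isWeightedHomogeneous_X F2 dR i) e)
    constructor
    · have h1 := hX2w.mul ih.1
      have h2 := (Q_X_homog hQ i).1.mul hXe2w
      have := h1.add (by
        have : 2 * wR i + 2 * (e * wR i) = 2 * wR i + 2 * (e * wR i) := rfl
        exact h2)
      have harith : 2 * wR i + 2 * (e * wR i) = 2 * ((e + 1) * wR i) := by ring
      rwa [harith] at this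
    · have h1 := hX2d.mul ih.2
      have h2 := (Q_X_homog hQ i).2.mul hXe2d
      have h2' : (Q (X i) * (X i ^ e) ^ 2).IsWeightedHomogeneous dR
          (2 * dR i + (2 * (e * dR i) + 1)) := by
        have harith : 2 * dR i + 1 + 2 * (e * dR i) = 2 * dR i + (2 * (e * dR i) + 1) := by ring
        rwa [harith] at h2
      have := h1.add h2'
      have harith : 2 * dR i + (2 * (e * dR i) + 1) = 2 * ((e + 1) * dR i) + 1 := by ring
      rwa [harith] at this

lemma Q_monomial_homog {Q : P →ₗ[F2] P} (hQ : IsQ Q) (m : ℕ →₀ ℕ) :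
    (Q (monomial m 1)).IsWeightedHomogeneous wR (2 * mwt wR m) ∧
      (Q (monomial m 1)).IsWeightedHomogeneous dR (2 * mwt dR m + 1) := by
  induction m using Finsupp.induction with
  | zero =>
    have : (monomial (0 : ℕ →₀ ℕ) (1 : F2) : P) = 1 := by simp
    rw [this, Q_one hQ]
    exact ⟨isWeightedHomogeneous_zero _ _ _, isWeightedHomogeneous_zero _ _ _⟩
  | single_add i e m hi he ih =>
    rw [monomial_single_add, hQ.2.2]
    have hmw : (monomial m (1 : F2) : P).IsWeightedHomogeneous wR (mwt wR m) :=
      isWeightedHomogeneous_monomial _ _ _ (mwt_eq_weight wR m).symm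
    have hmd : (monomial m (1 : F2) : P).IsWeightedHomogeneous dR (mwt dR m) :=
      isWeightedHomogeneous_monomial _ _ _ (mwt_eq_weight dR m).symm
    have hXew : ((X i : P) ^ e).IsWeightedHomogeneous wR (e * wR i) :=
      isWH_pow (isWeightedHomogeneous_X F2 wR i) e
    have hXed : ((X i : P) ^ e).IsWeightedHomogeneous dR (e * dR i) :=
      isWH_pow (isWeightedHomogeneous_X F2 dR i) e
    rw [mwt_add, mwt_single, mwt_add, mwt_single]
    constructor
    · have h1 := (isWH_sq hXew).mul ih.1
      have h2 := (Q_Xpow_homog hQ i e).1.mul (isWH_sq hmw)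
      have := h1.add h2
      have harith : 2 * (e * wR i) + 2 * mwt wR m = 2 * (e * wR i + mwt wR m) := by ring
      rwa [harith] at this
    · have h1 := (isWH_sq hXed).mul ih.2
      have h2 := (Q_Xpow_homog hQ i e).2.mul (isWH_sq hmd)
      have h1' : ((X i ^ e) ^ 2 * Q (monomial m 1)).IsWeightedHomogeneous dR
          (2 * (e * dR i) + (2 * mwt dR m + 1)) := by
        have harith : 2 * (e * dR i) + (2 * mwt dR m + 1)
            = 2 * (e * dR i) + (2 * mwt dR m + 1) := rfl
        exact h1
      have h2' : (Q (X i ^ e) * (monomial m (1 : F2)) ^ 2).IsWeightedHomogeneous dR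
          (2 * (e * dR i) + (2 * mwt dR m + 1)) := by
        have harith : 2 * (e * dR i) + 1 + 2 * mwt dR m
            = 2 * (e * dR i) + (2 * mwt dR m + 1) := by ring
        rwa [harith] at h2
      have := h1'.add h2'
      have harith : 2 * (e * dR i) + (2 * mwt dR m + 1)
          = 2 * (e * dR i + mwt dR m) + 1 := by ring
      rwa [harith] at this

/-- If `x ∈ R` is homogeneous of weight `n` and homogeneous of
dimension `d`, then `Q(x)` is homogeneous of weight `2n` and homogeneous of
dimension `2d + 1` (vacuously if `Q(x) = 0`). -/
theorem arakiKudo_homog (Q : P →ₗ[F2] P) (hQ : IsQ Q) (x : P) (n d : ℕ)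
    (hw : Homog wR n x) (hd : Homog dR d x) :
    Homog wR (2 * n) (Q x) ∧ Homog dR (2 * d + 1) (Q x) := by
  constructor
  · rw [homog_iff_isWH, ← support_sum_monomial_coeff x, map_sum]
    apply IsWeightedHomogeneous.sum
    intro m hm
    have hc : (monomial m (coeff m x) : P) = coeff m x • monomial m 1 := by
      rw [smul_monomial, smul_eq_mul, mul_one]
    rw [hc, map_smul, ← mem_weightedHomogeneousSubmodule]
    refine Submodule.smul_mem _ _ ((mem_weightedHomogeneousSubmodule _ _ _ _).2 ?_)
    rw [← hw m hm]
    exact (Q_monomial_homog hQ m).1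
  · rw [homog_iff_isWH, ← support_sum_monomial_coeff x, map_sum]
    apply IsWeightedHomogeneous.sum
    intro m hm
    have hc : (monomial m (coeff m x) : P) = coeff m x • monomial m 1 := by
      rw [smul_monomial, smul_eq_mul, mul_one]
    rw [hc, map_smul, ← mem_weightedHomogeneousSubmodule]
    refine Submodule.smul_mem _ _ ((mem_weightedHomogeneousSubmodule _ _ _ _).2 ?_)
    rw [← hd m hm]
    exact (Q_monomial_homog hQ m).2
end

section
/- For every k ≥ 1: (a) ψ_B(X 0 · x) = (X 0 ⊗ X 0) · ψ_B(x) for all x ∈ B, and (b) multiplication by X 0 restricts to an 𝔽₂-linear bijection from B_{2k} onto B_{2k+1} that sends each element homogeneous of dimension d to an element homogeneous of dimension d. Consequently the coalgebras modelling H_*(Bβ_{2k}; 𝔽₂) and H_*(Bβ_{2k+1}; 𝔽₂) are isomorphic as graded coalgebras. -/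
open MvPolynomial TensorProduct

lemma erase_even (m : ℕ →₀ ℕ) : 2 ∣ mwt wB (m.erase 0) := by
  unfold mwt Finsupp.sum
  apply Finset.dvd_sum
  intro i hi
  have hi0 : i ≠ 0 := by
    rw [Finsupp.support_erase, Finset.mem_erase] at hi
    exact hi.1
  obtain ⟨j, rfl⟩ := Nat.exists_eq_succ_of_ne_zero hi0
  exact Dvd.dvd.mul_left (dvd_pow_self 2 (Nat.succ_ne_zero j)) _

lemma mwt_decomp (m : ℕ →₀ ℕ) : mwt wB m = m 0 + mwt wB (m.erase 0) := by
  conv_lhs => rw [← Finsupp.single_add_erase 0 m]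
  rw [mwt_add, mwt_single]
  simp [wB]

/-- For every `k ≥ 1`: (a) `ψ_B(X 0 · x) = (X 0 ⊗ X 0) · ψ_B(x)`
for all `x ∈ B`, and (b) multiplication by `X 0` restricts to an 𝔽₂-linear bijection
from `B_{2k}` onto `B_{2k+1}` sending elements homogeneous of dimension `d` to
elements homogeneous of dimension `d`.  (Hence `H_*(Bβ_{2k}; 𝔽₂)` and
`H_*(Bβ_{2k+1}; 𝔽₂)` are isomorphic as graded coalgebras.) -/
theorem braid_even_odd (ψ : P →ₐ[F2] P ⊗[F2] P) (hψ : IsPsiB ψ)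
    (k : ℕ) (hk : 1 ≤ k) :
    (∀ x : P, ψ (X 0 * x) = (X 0 ⊗ₜ[F2] X 0) * ψ x) ∧
    (∀ x ∈ spanWt wB (2 * k), X 0 * x ∈ spanWt wB (2 * k + 1)) ∧
    (∀ x ∈ spanWt wB (2 * k), ∀ y ∈ spanWt wB (2 * k), X 0 * x = X 0 * y → x = y) ∧
    (∀ y ∈ spanWt wB (2 * k + 1), ∃ x ∈ spanWt wB (2 * k), X 0 * x = y) ∧
    (∀ (d : ℕ) (x : P), Homog dB d x → Homog dB d (X 0 * x)) := by
  refine ⟨?_, ?_, ?_, ?_, ?_⟩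
  · intro x
    rw [map_mul, hψ.1]
  · intro x hx
    refine Submodule.span_induction ?_ ?_ ?_ ?_ hx
    · rintro p ⟨m, hm, rfl⟩
      apply Submodule.subset_span
      refine ⟨Finsupp.single 0 1 + m, ?_, ?_⟩
      · rw [mwt_add, mwt_single, hm]
        simp only [wB, pow_zero, mul_one]
        omega
      · rw [monomial_single_add, pow_one]
    · simp
    · intro a b _ _ ha hb
      rw [mul_add]; exact Submodule.add_mem _ ha hb
    · intro c a _ ha
      rw [mul_smul_comm]; exact Submodule.smul_mem _ _ ha
  · intro x _ y _ h
    exact mul_left_cancel₀ (X_ne_zero 0) h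
  · intro y hy
    have hle : spanWt wB (2 * k + 1) ≤
        Submodule.map (LinearMap.mulLeft F2 (X 0 : P)) (spanWt wB (2 * k)) := by
      rw [spanWt, Submodule.span_le]
      rintro p ⟨m, hm, rfl⟩
      obtain ⟨t, ht⟩ := erase_even m
      have hd := mwt_decomp m
      have h0 : 1 ≤ m 0 := by omega
      refine ⟨monomial (Finsupp.single 0 (m 0 - 1) + m.erase 0) 1, ?_, ?_⟩
      · apply Submodule.subset_span
        refine ⟨_, ?_, rfl⟩
        rw [mwt_add, mwt_single]
        simp only [wB, pow_zero, mul_one]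
        omega
      · have hm' : Finsupp.single 0 1 + (Finsupp.single 0 (m 0 - 1) + m.erase 0) = m := by
          rw [← add_assoc, ← Finsupp.single_add, show 1 + (m 0 - 1) = m 0 by omega,
            Finsupp.single_add_erase]
        rw [LinearMap.mulLeft_apply, ← pow_one (X 0 : P), ← monomial_single_add, hm']
    obtain ⟨x, hx, hxy⟩ := hle hy
    exact ⟨x, hx, hxy⟩
  · intro d x hx m hm
    rw [support_X_mul] at hm
    obtain ⟨m', hm', rfl⟩ := Finset.mem_map.mp hm
    have : (addLeftEmbedding (Finsupp.single 0 1)) m' = Finsupp.single 0 1 + m' := rfl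
    rw [this, mwt_add, mwt_single]
    simp only [dB, pow_zero, Nat.sub_self, mul_zero, zero_add]
    exact hx m' hm'
end

section
/- Let n ≥ 1 and let J ⊆ ℕ be the set of binary digits of n, i.e. n = Σ_{j∈J} 2^j with J finite. Then every monomial in B of weight n has dimension at most n − |J|, and the unique monomial of weight n and dimension n − |J| is ∏_{j∈J} X j. (This models the fact that the top-dimensional 𝔽₂-homology group of Bβₙ is one-dimensional, spanned by ∏_{j∈J} Qʲg, in dimension n − |J|.) -/
open MvPolynomial TensorProduct

lemma multiset_key : ∀ k : ℕ, ∀ s : Multiset ℕ, Multiset.card s = k →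
    ∀ J : Finset ℕ, (s.map fun i => 2 ^ i).sum = ∑ j ∈ J, 2 ^ j →
    J.card ≤ Multiset.card s ∧ (Multiset.card s = J.card → s = J.val) := by
  intro k
  induction k using Nat.strong_induction_on with
  | _ k ih =>
  intro s hcard J hsum
  by_cases hnd : s.Nodup
  · have h1 : s.toFinset.val = s := by
      rw [Multiset.toFinset_val, Multiset.dedup_eq_self.mpr hnd]
    have hsum2 : ∑ j ∈ s.toFinset, 2 ^ j = ∑ j ∈ J, 2 ^ j := by
      rw [Finset.sum, Finset.sum, h1]; exact hsum
    have hSJ : s.toFinset = J := by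
      have := congrArg (fun n => n.bitIndices.toFinset) hsum2
      simpa using this
    constructor
    · rw [← hSJ, Finset.card, h1]
    · intro _; rw [← hSJ, h1]
  · rw [Multiset.nodup_iff_count_le_one] at hnd
    push_neg at hnd
    obtain ⟨a, ha⟩ := hnd
    have hle : (a ::ₘ {a} : Multiset ℕ) ≤ s := by
      rw [Multiset.le_iff_count]
      intro b
      by_cases hb : b = a
      · subst hb; simpa [Nat.lt_iff_add_one_le] using ha
      · simp [Multiset.count_cons_of_ne hb, Multiset.count_singleton, hb]
    obtain ⟨t, ht⟩ := Multiset.le_iff_exists_add.mp hle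
    have hsum' : (((a + 1) ::ₘ t).map fun i => 2 ^ i).sum = ∑ j ∈ J, 2 ^ j := by
      rw [← hsum, ht]
      simp [pow_succ, two_mul]
      omega
    have hcard' : Multiset.card ((a + 1) ::ₘ t) = Multiset.card t + 1 := by simp
    have hcards : Multiset.card s = Multiset.card t + 2 := by rw [ht]; simp
    have hlt : Multiset.card t + 1 < k := by omega
    have := ih _ hlt ((a + 1) ::ₘ t) hcard' J hsum'
    rw [hcard'] at this
    constructor
    · omega
    · intro h; omega

lemma map_toMultiset_sum (f : ℕ → ℕ) (m : ℕ →₀ ℕ) :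
    (m.toMultiset.map f).sum = m.sum fun i e => e * f i := by
  induction m using Finsupp.induction with
  | zero => simp
  | single_add a n m ha' hn ih =>
    rw [Finsupp.toMultiset_add, Multiset.map_add, Multiset.sum_add, ih,
      Finsupp.toMultiset_single,
      Finsupp.sum_add_index' (by simp) (fun i b c => add_mul b c (f i)),
      Finsupp.sum_single_index (by simp)]
    rw [show (n • {a} : Multiset ℕ) = Multiset.replicate n a from by
      simp [Multiset.nsmul_singleton]]
    simp [Multiset.map_replicate, Multiset.sum_replicate, mul_comm]


lemma nat_mul_sub_one (a b : ℕ) : a * (b - 1) = a * b - a := by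
  cases b with
  | zero => simp
  | succ b => rw [Nat.succ_sub_one, Nat.mul_succ]; omega

lemma tot_le_mwt (m : ℕ →₀ ℕ) : (m.sum fun _ e => e) ≤ mwt wB m := by
  apply Finset.sum_le_sum
  intro i _
  exact Nat.le_mul_of_pos_right _ (pow_pos two_pos i)

lemma mwt_dB_eq (m : ℕ →₀ ℕ) : mwt dB m = mwt wB m - m.sum (fun _ e => e) := by
  unfold mwt dB wB Finsupp.sum
  beta_reduce
  rw [← Finset.sum_tsub_distrib (f := fun a => m a * 2 ^ a) (g := fun a => m a) m.support
    (fun i _ => Nat.le_mul_of_pos_right _ (pow_pos two_pos i))]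
  exact Finset.sum_congr rfl fun i _ => nat_mul_sub_one _ _


/-- Let `n ≥ 1` with binary expansion `n = Σ_{j∈J} 2^j`.  Every
monomial in `B` of weight `n` has dimension at most `n − |J|`, and the unique
monomial of weight `n` and dimension `n − |J|` is `∏_{j∈J} X j` (the top-dimensional
𝔽₂-homology of `Bβₙ` is one-dimensional, spanned by `∏_{j∈J} Qʲg`). -/
theorem braid_top_class (n : ℕ) (hn : 1 ≤ n) (J : Finset ℕ)
    (hJ : n = ∑ j ∈ J, 2 ^ j) :
    (∀ m : ℕ →₀ ℕ, mwt wB m = n → mwt dB m ≤ n - J.card) ∧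
    (∀ m : ℕ →₀ ℕ, mwt wB m = n → mwt dB m = n - J.card →
      (monomial m 1 : P) = ∏ j ∈ J, X j) := by
  have key : ∀ m : ℕ →₀ ℕ, mwt wB m = n →
      J.card ≤ m.sum (fun _ e => e) ∧
      ((m.sum fun _ e => e) = J.card → m = ∑ j ∈ J, Finsupp.single j 1) := by
    intro m hm
    have h1 : (m.toMultiset.map fun i => 2 ^ i).sum = ∑ j ∈ J, 2 ^ j := by
      rw [map_toMultiset_sum, ← hJ, ← hm]; rfl
    have h2 := multiset_key _ m.toMultiset rfl J h1
    have hcard : Multiset.card m.toMultiset = m.sum fun _ e => e := by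
      rw [Finsupp.card_toMultiset]; rfl
    rw [hcard] at h2
    refine ⟨h2.1, fun h => ?_⟩
    have h3 := h2.2 h
    have hts : Finsupp.toMultiset (∑ j ∈ J, Finsupp.single j (1:ℕ)) = m.toMultiset := by
      rw [h3, Finsupp.toMultiset_sum_single, one_smul]
    calc m = (Finsupp.toMultiset m).toFinsupp := (Finsupp.toMultiset_toFinsupp m).symm
      _ = ∑ j ∈ J, Finsupp.single j 1 := by rw [← hts, Finsupp.toMultiset_toFinsupp]
  constructor
  · intro m hm
    rw [mwt_dB_eq m, hm]
    exact Nat.sub_le_sub_left (key m hm).1 n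
  · intro m hm hd
    rw [mwt_dB_eq m, hm] at hd
    have h1 := (key m hm).1
    have h2 := tot_le_mwt m; rw [hm] at h2
    have h3 : (m.sum fun _ e => e) = J.card := by omega
    rw [(key m hm).2 h3, monomial_sum_one]
    rfl
end

section
/- Let k ≥ 1 and let J ⊆ ℕ be the set of binary digits of k, i.e. k = Σ_{j∈J} 2^j with J finite. Then every monomial in R of weight k has dimension at most 2k − |J|, and the unique monomial of weight k and dimension 2k − |J| is ∏_{j∈J} X (j+1). (This models the fact that the top-dimensional 𝔽₂-homology group of Ratₖ is one-dimensional, spanned by ∏_{j∈J} Qʲ(g⁻¹Qg), in dimension 2k − |J|.) -/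
open MvPolynomial TensorProduct

lemma sum_pad (c : ℕ → ℕ) (g : ℕ → ℕ → ℕ) (hg : ∀ j, g j 0 = 0) {N N' : ℕ}
    (h : N ≤ N') (hc : ∀ j, N ≤ j → c j = 0) :
    ∑ j ∈ Finset.range N', g j (c j) = ∑ j ∈ Finset.range N, g j (c j) :=
  (Finset.sum_subset (Finset.range_subset_range.2 h) (fun x _ hx => by
    rw [hc x (by simpa using hx), hg])).symm

lemma key : ∀ M : ℕ, ∀ k N : ℕ, ∀ c : ℕ → ℕ, ∀ J : Finset ℕ,
    k + (∑ j ∈ Finset.range N, c j) ≤ M →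
    (∑ j ∈ J, 2 ^ j) = k →
    (∑ j ∈ Finset.range N, c j * 2 ^ j) = k →
    (∀ j, N ≤ j → c j = 0) →
    J.card ≤ ∑ j ∈ Finset.range N, c j ∧
      (J.card = ∑ j ∈ Finset.range N, c j → ∀ j, c j = if j ∈ J then 1 else 0) := by
  intro M
  induction M with
  | zero =>
    intro k N c J hM hJ hc hc0
    -- k = 0
    have hk : k = 0 := by omega
    subst hk
    have hcz : ∀ j, c j = 0 := by
      intro j
      by_cases hj : j < N
      · have h2 := Finset.sum_eq_zero_iff.1 hc j (Finset.mem_range.2 hj)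
        rcases Nat.mul_eq_zero.1 h2 with h | h
        · exact h
        · exact absurd h (Nat.pow_pos (by norm_num)).ne'
      · exact hc0 j (by omega)
    have hJe : J = ∅ := by
      by_contra h
      obtain ⟨j, hj⟩ := Finset.nonempty_iff_ne_empty.2 h
      have h1 : 0 < ∑ j ∈ J, 2 ^ j :=
        Finset.sum_pos' (fun i _ => Nat.zero_le _) ⟨j, hj, Nat.pow_pos (by norm_num)⟩
      omega
    subst hJe
    constructor
    · simp
    · intro _ j; simp [hcz j]
  | succ M ih =>
    intro k N c J hM hJ hc hc0
    rcases Nat.eq_zero_or_pos k with hk0 | hkpos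
    · subst hk0
      clear ih hM
      have hcz : ∀ j, c j = 0 := by
        intro j
        by_cases hj : j < N
        · have h2 := Finset.sum_eq_zero_iff.1 hc j (Finset.mem_range.2 hj)
          rcases Nat.mul_eq_zero.1 h2 with h | h
          · exact h
          · exact absurd h (Nat.pow_pos (by norm_num)).ne'
        · exact hc0 j (by omega)
      have hJe : J = ∅ := by
        by_contra h
        obtain ⟨j, hj⟩ := Finset.nonempty_iff_ne_empty.2 h
        have h1 : 0 < ∑ j ∈ J, 2 ^ j :=
          Finset.sum_pos' (fun i _ => Nat.zero_le _) ⟨j, hj, Nat.pow_pos (by norm_num)⟩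
        omega
      subst hJe
      refine ⟨by simp, fun _ j => by simp [hcz j]⟩
    -- k > 0
    have hN : 0 < N := by
      rcases Nat.eq_zero_or_pos N with h | h
      · subst h; simp at hc; omega
      · exact h
    obtain ⟨N', rfl⟩ : ∃ N', N = N' + 1 := ⟨N - 1, by omega⟩
    have hc0S : c 0 ≤ ∑ j ∈ Finset.range (N' + 1), c j :=
      Finset.single_le_sum (fun i _ => Nat.zero_le (c i)) (Finset.mem_range.2 (by omega))
    have hsplit : (∑ j ∈ Finset.range N', c (j + 1) * 2 ^ (j + 1)) + c 0 = k := by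
      have h := Finset.sum_range_succ' (fun j => c j * 2 ^ j) N'
      rw [hc] at h
      simp only [pow_zero, mul_one] at h
      omega
    have hSsplit : (∑ j ∈ Finset.range N', c (j + 1)) + c 0
        = ∑ j ∈ Finset.range (N' + 1), c j := by
      have h := Finset.sum_range_succ' c N'
      omega
    have heven : 2 ∣ ∑ j ∈ Finset.range N', c (j + 1) * 2 ^ (j + 1) :=
      Finset.dvd_sum (fun i _ => ⟨c (i + 1) * 2 ^ i, by ring⟩)
    by_cases hkpar : 2 ∣ k
    · -- k even, so 0 ∉ J and c 0 even
      have h0J : 0 ∉ J := by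
        intro h0
        have h1 := Finset.add_sum_erase J (fun j => 2 ^ j) h0
        have hev : 2 ∣ ∑ j ∈ J.erase 0, 2 ^ j :=
          Finset.dvd_sum (fun i hi => dvd_pow_self 2 (Finset.mem_erase.1 hi).1)
        simp only [pow_zero] at h1
        omega
      have hc0even : 2 ∣ c 0 := by omega
      rcases Nat.eq_zero_or_pos (c 0) with hczero | hcpos
      · -- divide everything by 2
        obtain ⟨c', hc'e⟩ : ∃ c' : ℕ → ℕ, ∀ j, c' j = c (j + 1) := ⟨_, fun _ => rfl⟩
        have hJne0 : ∀ j ∈ J, j ≠ 0 := fun j hj h => h0J (h ▸ hj)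
        have hinj : Set.InjOn (· - 1) ↑J := by
          intro a ha b hb hab
          have := hJne0 a ha; have := hJne0 b hb
          simp only at hab; omega
        have hk' : k = 2 * (k / 2) := by omega
        have hJ'sum : (∑ j ∈ J.image (· - 1), 2 ^ j) = k / 2 := by
          have h1 : (∑ j ∈ J.image (· - 1), 2 ^ j) = ∑ j ∈ J, 2 ^ (j - 1) :=
            Finset.sum_image (fun a ha b hb => hinj ha hb)
          have h2 : 2 * ∑ j ∈ J, 2 ^ (j - 1) = ∑ j ∈ J, 2 ^ j := by
            rw [Finset.mul_sum]
            refine Finset.sum_congr rfl (fun j hj => ?_)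
            rw [← pow_succ']
            congr 1
            have := hJne0 j hj; omega
          omega
        have hcpad : (∑ j ∈ Finset.range (N' + 1), c (j + 1) * 2 ^ (j + 1)) + c 0 = k := by
          have h := Finset.sum_range_succ' (fun j => c j * 2 ^ j) (N' + 1)
          rw [sum_pad c (fun j e => e * 2 ^ j) (fun j => by simp) (by omega) hc0, hc] at h
          simp only [pow_zero, mul_one] at h
          omega
        have hcpadS : (∑ j ∈ Finset.range (N' + 1), c (j + 1)) + c 0
            = ∑ j ∈ Finset.range (N' + 1), c j := by
          have h := Finset.sum_range_succ' c (N' + 1)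
          rw [sum_pad c (fun _ e => e) (fun _ => rfl) (by omega) hc0] at h
          omega
        have hc'sum : (∑ j ∈ Finset.range (N' + 1), c' j * 2 ^ j) = k / 2 := by
          have h2 : 2 * ∑ j ∈ Finset.range (N' + 1), c' j * 2 ^ j
              = ∑ j ∈ Finset.range (N' + 1), c (j + 1) * 2 ^ (j + 1) := by
            rw [Finset.mul_sum]
            exact Finset.sum_congr rfl (fun j _ => by rw [hc'e]; ring)
          omega
        have hc'S : (∑ j ∈ Finset.range (N' + 1), c' j) = ∑ j ∈ Finset.range (N' + 1), c j := by
          have h2 : (∑ j ∈ Finset.range (N' + 1), c' j)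
              = ∑ j ∈ Finset.range (N' + 1), c (j + 1) :=
            Finset.sum_congr rfl (fun j _ => hc'e j)
          omega
        have hc0' : ∀ j, N' + 1 ≤ j → c' j = 0 := fun j hj => by
          rw [hc'e]; exact hc0 (j + 1) (by omega)
        have hmeas : k / 2 + (∑ j ∈ Finset.range (N' + 1), c' j) ≤ M := by
          rw [hc'S]; omega
        obtain ⟨hle, heq⟩ := ih (k / 2) (N' + 1) c' (J.image (· - 1)) hmeas hJ'sum hc'sum hc0'
        have hcard : (J.image (· - 1)).card = J.card := Finset.card_image_of_injOn hinj
        have hmem : ∀ t : ℕ, t ∈ J.image (· - 1) ↔ t + 1 ∈ J := by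
          intro t
          simp only [Finset.mem_image]
          constructor
          · rintro ⟨a, ha, rfl⟩
            have h5 := hJne0 a ha
            have h6 : a - 1 + 1 = a := by omega
            rwa [h6]
          · intro h; exact ⟨t + 1, h, rfl⟩
        constructor
        · omega
        · intro hceq j
          have heq' := heq (by omega)
          match j with
          | 0 => simp [hczero, h0J]
          | t + 1 =>
            have h7 := heq' t
            rw [hc'e] at h7
            rw [h7]
            simp only [hmem t]
      · -- c 0 ≥ 2 : carry
        have hc02 : 2 ≤ c 0 := by omega
        obtain ⟨c', hc'e⟩ : ∃ c' : ℕ → ℕ,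
            ∀ j, c' j = if j = 0 then c 0 - 2 else if j = 1 then c 1 + 1 else c j :=
          ⟨_, fun _ => rfl⟩
        have hc'0 : c' 0 = c 0 - 2 := by simp [hc'e]
        have hc'1 : c' 1 = c 1 + 1 := by rw [hc'e]; rfl
        have hc'rest : ∀ j, 2 ≤ j → c' j = c j := by
          intro j hj
          rw [hc'e, if_neg (by omega), if_neg (by omega)]
        have hc0' : ∀ j, N' + 3 ≤ j → c' j = 0 := by
          intro j hj
          rw [hc'rest j (by omega)]; exact hc0 j (by omega)
        have hdec : ∀ f : ℕ → ℕ, (∑ j ∈ Finset.range (N' + 3), f j)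
            = (∑ j ∈ Finset.range (N' + 1), f (j + 2)) + f 1 + f 0 := by
          intro f
          rw [Finset.sum_range_succ' f (N' + 2),
            Finset.sum_range_succ' (fun i => f (i + 1)) (N' + 1)]
        have hcpad : (∑ j ∈ Finset.range (N' + 1), c (j + 2) * 2 ^ (j + 2))
            + c 1 * 2 + c 0 = k := by
          have h := hdec (fun j => c j * 2 ^ j)
          rw [sum_pad c (fun j e => e * 2 ^ j) (fun j => by simp) (by omega) hc0, hc] at h
          simp only [pow_zero, pow_one, mul_one] at h
          omega
        have hcpadS : (∑ j ∈ Finset.range (N' + 1), c (j + 2)) + c 1 + c 0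
            = ∑ j ∈ Finset.range (N' + 1), c j := by
          have h := hdec c
          rw [sum_pad c (fun _ e => e) (fun _ => rfl) (by omega) hc0] at h
          omega
        have hrest2 : (∑ j ∈ Finset.range (N' + 1), c' (j + 2) * 2 ^ (j + 2))
            = ∑ j ∈ Finset.range (N' + 1), c (j + 2) * 2 ^ (j + 2) :=
          Finset.sum_congr rfl (fun j _ => by rw [hc'rest (j + 2) (by omega)])
        have hrest2S : (∑ j ∈ Finset.range (N' + 1), c' (j + 2))
            = ∑ j ∈ Finset.range (N' + 1), c (j + 2) :=
          Finset.sum_congr rfl (fun j _ => by rw [hc'rest (j + 2) (by omega)])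
        have hc'sum : (∑ j ∈ Finset.range (N' + 3), c' j * 2 ^ j) = k := by
          have h := hdec (fun j => c' j * 2 ^ j)
          simp only [pow_zero, pow_one, mul_one] at h
          rw [hrest2, hc'0, hc'1] at h
          omega
        have hc'S : (∑ j ∈ Finset.range (N' + 3), c' j) + 1
            = ∑ j ∈ Finset.range (N' + 1), c j := by
          have h := hdec c'
          rw [hrest2S, hc'0, hc'1] at h
          omega
        have hmeas : k + (∑ j ∈ Finset.range (N' + 3), c' j) ≤ M := by omega
        obtain ⟨hle, _⟩ := ih k (N' + 3) c' J hmeas hJ hc'sum hc0'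
        constructor
        · omega
        · intro hceq
          exact absurd hceq (by omega)
    · -- k odd : 0 ∈ J and c 0 odd
      have h0J : 0 ∈ J := by
        by_contra h0
        have hev : 2 ∣ ∑ j ∈ J, 2 ^ j :=
          Finset.dvd_sum (fun i hi => dvd_pow_self 2 (fun h => h0 (h ▸ hi)))
        omega
      have hc0pos : 1 ≤ c 0 := by omega
      obtain ⟨c', hc'e⟩ : ∃ c' : ℕ → ℕ,
          ∀ j, c' j = if j = 0 then c 0 - 1 else c j := ⟨_, fun _ => rfl⟩
      have hc'0 : c' 0 = c 0 - 1 := by simp [hc'e]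
      have hc'rest : ∀ j, 1 ≤ j → c' j = c j := by
        intro j hj
        rw [hc'e, if_neg (by omega)]
      have hJ'sum : (∑ j ∈ J.erase 0, 2 ^ j) = k - 1 := by
        have h1 := Finset.add_sum_erase J (fun j => 2 ^ j) h0J
        simp only [pow_zero] at h1
        omega
      have hrest2 : (∑ j ∈ Finset.range N', c' (j + 1) * 2 ^ (j + 1))
          = ∑ j ∈ Finset.range N', c (j + 1) * 2 ^ (j + 1) :=
        Finset.sum_congr rfl (fun j _ => by rw [hc'rest (j + 1) (by omega)])
      have hrest2S : (∑ j ∈ Finset.range N', c' (j + 1))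
          = ∑ j ∈ Finset.range N', c (j + 1) :=
        Finset.sum_congr rfl (fun j _ => by rw [hc'rest (j + 1) (by omega)])
      have hc'sum : (∑ j ∈ Finset.range (N' + 1), c' j * 2 ^ j) = k - 1 := by
        have h := Finset.sum_range_succ' (fun j => c' j * 2 ^ j) N'
        simp only [pow_zero, mul_one] at h
        rw [hrest2, hc'0] at h
        omega
      have hc'S : (∑ j ∈ Finset.range (N' + 1), c' j) + 1
          = ∑ j ∈ Finset.range (N' + 1), c j := by
        have h := Finset.sum_range_succ' c' N'
        rw [hrest2S, hc'0] at h
        omega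
      have hc0' : ∀ j, N' + 1 ≤ j → c' j = 0 := by
        intro j hj
        rw [hc'rest j (by omega)]; exact hc0 j hj
      have hmeas : (k - 1) + (∑ j ∈ Finset.range (N' + 1), c' j) ≤ M := by omega
      obtain ⟨hle, heq⟩ := ih (k - 1) (N' + 1) c' (J.erase 0) hmeas hJ'sum hc'sum hc0'
      have hcard : (J.erase 0).card + 1 = J.card := by
        rw [Finset.card_erase_of_mem h0J]
        have : 0 < J.card := Finset.card_pos.2 ⟨0, h0J⟩
        omega
      constructor
      · omega
      · intro hceq j
        have heq' := heq (by omega)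
        match j with
        | 0 =>
          have h00 := heq' 0
          have hn0 : (0 : ℕ) ∉ J.erase 0 := fun h => (Finset.mem_erase.1 h).1 rfl
          rw [if_neg hn0] at h00
          rw [hc'0] at h00
          rw [if_pos h0J]
          omega
        | t + 1 =>
          have h7 := heq' (t + 1)
          rw [hc'rest (t + 1) (by omega)] at h7
          rw [h7]
          have h8 : (t + 1 ∈ J.erase 0) ↔ (t + 1 ∈ J) := by
            simp [Finset.mem_erase]
          simp only [h8]

lemma prodX (J : Finset ℕ) :
    (∏ j ∈ J, (X (j + 1) : P)) = monomial (∑ j ∈ J, Finsupp.single (j + 1) 1) 1 := by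
  induction J using Finset.induction with
  | empty => simp
  | insert _ _ ha ih =>
    rw [Finset.prod_insert ha, Finset.sum_insert ha, ih, MvPolynomial.X, monomial_mul, one_mul]

lemma aux (k : ℕ) (J : Finset ℕ) (hJ : k = ∑ j ∈ J, 2 ^ j) (m : ℕ →₀ ℕ)
    (hwt : mwt wR m = k) :
    mwt dR m ≤ 2 * k - J.card ∧
      (mwt dR m = 2 * k - J.card → m = ∑ j ∈ J, Finsupp.single (j + 1) 1) := by
  set N₀ := m.support.sup id with hN₀
  have hbd : ∀ i, N₀ + 2 ≤ i → m i = 0 := by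
    intro i hi
    by_contra h
    have h1 : i ∈ m.support := Finsupp.mem_support_iff.2 h
    have h2 := Finset.le_sup (f := id) h1
    simp only [id] at h2
    omega
  have hsupp : m.support ⊆ Finset.range (N₀ + 2) := by
    intro i hi
    rw [Finset.mem_range]
    by_contra h
    exact (Finsupp.mem_support_iff.1 hi) (hbd i (by omega))
  have hconv : ∀ w : ℕ → ℕ, mwt w m = ∑ i ∈ Finset.range (N₀ + 2), m i * w i := by
    intro w
    exact Finsupp.sum_of_support_subset m hsupp _ (fun i _ => by simp)
  -- weight
  have hw1 : (∑ j ∈ Finset.range (N₀ + 1), m (j + 1) * 2 ^ j) + m 0 = k := by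
    have h := Finset.sum_range_succ' (fun i => m i * wR i) (N₀ + 1)
    rw [← hconv wR, hwt] at h
    simp only [wR, mul_one] at h
    omega
  -- dimension
  have hd1 : mwt dR m = ∑ j ∈ Finset.range (N₀ + 1), m (j + 1) * (2 ^ (j + 1) - 1) := by
    have h := Finset.sum_range_succ' (fun i => m i * dR i) (N₀ + 1)
    rw [← hconv dR] at h
    simp only [dR, mul_zero, add_zero] at h
    exact h
  have hd2 : (∑ j ∈ Finset.range (N₀ + 1), m (j + 1) * (2 ^ (j + 1) - 1))
      + (∑ j ∈ Finset.range (N₀ + 1), m (j + 1))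
      = 2 * ∑ j ∈ Finset.range (N₀ + 1), m (j + 1) * 2 ^ j := by
    rw [← Finset.sum_add_distrib, Finset.mul_sum]
    refine Finset.sum_congr rfl (fun j _ => ?_)
    obtain ⟨x, hx⟩ : ∃ x, 2 ^ j = x + 1 := ⟨2 ^ j - 1, by have := Nat.one_le_two_pow (n := j); omega⟩
    rw [pow_succ, hx]
    have h3 : (x + 1) * 2 - 1 = 2 * x + 1 := by omega
    rw [h3]
    ring
  -- the carried exponent function
  obtain ⟨c, hce⟩ : ∃ c : ℕ → ℕ,
      ∀ j, c j = if j = 0 then m 0 + m 1 else m (j + 1) := ⟨_, fun _ => rfl⟩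
  have hc0 : c 0 = m 0 + m 1 := by simp [hce]
  have hcs : ∀ j, 1 ≤ j → c j = m (j + 1) := fun j hj => by
    rw [hce, if_neg (by omega)]
  have hpeelm : (∑ j ∈ Finset.range (N₀ + 1), m (j + 1) * 2 ^ j)
      = (∑ j ∈ Finset.range N₀, m (j + 2) * 2 ^ (j + 1)) + m 1 := by
    have h := Finset.sum_range_succ' (fun j => m (j + 1) * 2 ^ j) N₀
    simp only [pow_zero, mul_one] at h
    exact h
  have hpeelmS : (∑ j ∈ Finset.range (N₀ + 1), m (j + 1))
      = (∑ j ∈ Finset.range N₀, m (j + 2)) + m 1 := by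
    have h := Finset.sum_range_succ' (fun j => m (j + 1)) N₀
    exact h
  have hcrest : (∑ j ∈ Finset.range N₀, c (j + 1) * 2 ^ (j + 1))
      = ∑ j ∈ Finset.range N₀, m (j + 2) * 2 ^ (j + 1) :=
    Finset.sum_congr rfl (fun j _ => by rw [hcs (j + 1) (by omega)])
  have hcrestS : (∑ j ∈ Finset.range N₀, c (j + 1))
      = ∑ j ∈ Finset.range N₀, m (j + 2) :=
    Finset.sum_congr rfl (fun j _ => by rw [hcs (j + 1) (by omega)])
  have hcsum : (∑ j ∈ Finset.range (N₀ + 1), c j * 2 ^ j) = k := by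
    have h := Finset.sum_range_succ' (fun j => c j * 2 ^ j) N₀
    simp only [pow_zero, mul_one] at h
    rw [hcrest, hc0] at h
    omega
  have hcS : (∑ j ∈ Finset.range (N₀ + 1), c j)
      = m 0 + ∑ j ∈ Finset.range (N₀ + 1), m (j + 1) := by
    have h := Finset.sum_range_succ' c N₀
    rw [hcrestS, hc0] at h
    omega
  have hc0' : ∀ j, N₀ + 1 ≤ j → c j = 0 := by
    intro j hj
    rw [hcs j (by omega)]
    exact hbd (j + 1) (by omega)
  obtain ⟨hle, heq⟩ := key (k + ∑ j ∈ Finset.range (N₀ + 1), c j) k (N₀ + 1) c J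
    le_rfl hJ.symm hcsum hc0'
  constructor
  · omega
  · intro hdim
    have hm0 : m 0 = 0 := by omega
    have hcard : J.card = ∑ j ∈ Finset.range (N₀ + 1), c j := by omega
    have hcind := heq hcard
    have hmval : ∀ t, m (t + 1) = if t ∈ J then 1 else 0 := by
      intro t
      match t with
      | 0 =>
        have h := hcind 0
        rw [hc0] at h
        simpa [hm0] using h
      | t + 1 =>
        have h := hcind (t + 1)
        rw [hcs (t + 1) (by omega)] at h
        exact h
    ext i
    match i with
    | 0 =>
      rw [hm0, Finsupp.finset_sum_apply]
      exact (Finset.sum_eq_zero (fun j _ => Finsupp.single_eq_of_ne (by omega))).symm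
    | t + 1 =>
      rw [hmval t, Finsupp.finset_sum_apply]
      have h : ∀ j ∈ J, (Finsupp.single (j + 1) 1 : ℕ →₀ ℕ) (t + 1)
          = if j = t then 1 else 0 := by
        intro j _
        rw [Finsupp.single_apply]
        congr 1
        simp [Nat.add_right_cancel_iff]
      rw [Finset.sum_congr rfl h, Finset.sum_ite_eq' J t (fun _ => 1)]

/-- Let `k ≥ 1` with binary expansion `k = Σ_{j∈J} 2^j`.  Every
monomial in `R` of weight `k` has dimension at most `2k − |J|`, and the unique
monomial of weight `k` and dimension `2k − |J|` is `∏_{j∈J} X (j+1)` (the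
top-dimensional 𝔽₂-homology of `Ratₖ` is one-dimensional, spanned by
`∏_{j∈J} Qʲ(g⁻¹Qg)`). -/
theorem rat_top_class (k : ℕ) (hk : 1 ≤ k) (J : Finset ℕ)
    (hJ : k = ∑ j ∈ J, 2 ^ j) :
    (∀ m : ℕ →₀ ℕ, mwt wR m = k → mwt dR m ≤ 2 * k - J.card) ∧
    (∀ m : ℕ →₀ ℕ, mwt wR m = k → mwt dR m = 2 * k - J.card →
      (monomial m 1 : P) = ∏ j ∈ J, X (j + 1)) := by
  refine ⟨fun m hwt => (aux k J hJ m hwt).1, fun m hwt hdim => ?_⟩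
  rw [(aux k J hJ m hwt).2 hdim, prodX]
end

section
/- Let J ⊆ ℕ be a finite set and let r ≥ 1 be an integer with r ∈ J and r − 1 ∉ J. Then there is no subset J′ ⊆ J with Σ_{j∈J′} (2^(j+1) − 1) = 2^r − 1. -/
open MvPolynomial TensorProduct

lemma sum_mersenne_range_lt (k : ℕ) :
    ∑ j ∈ Finset.range k, (2 ^ (j + 1) - 1) < 2 ^ (k + 1) - 1 := by
  induction k with
  | zero => simp
  | succ k ih =>
    rw [Finset.sum_range_succ]
    have h1 : (1:ℕ) ≤ 2 ^ (k + 1) := Nat.one_le_two_pow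
    have h2 : 2 ^ (k + 2) = 2 * 2 ^ (k + 1) := by ring
    omega

/-- Let `J ⊆ ℕ` be finite and `r ≥ 1` with `r ∈ J` and
`r − 1 ∉ J`.  Then no subset `J′ ⊆ J` satisfies `Σ_{j∈J′} (2^(j+1) − 1) = 2^r − 1`. -/
theorem no_subset_sum_mersenne (J : Finset ℕ) (r : ℕ) (hr : 1 ≤ r)
    (hrJ : r ∈ J) (hrpred : r - 1 ∉ J) :
    ¬ ∃ J' ⊆ J, ∑ j ∈ J', (2 ^ (j + 1) - 1) = 2 ^ r - 1 := by
  rintro ⟨J', hJ', hsum⟩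
  have hsub : J' ⊆ Finset.range (r - 1) := by
    intro j hj
    have hjJ := hJ' hj
    have h1 : 2 ^ (j + 1) - 1 ≤ 2 ^ r - 1 :=
      hsum ▸ Finset.single_le_sum (f := fun j => 2 ^ (j + 1) - 1) (fun i _ => Nat.zero_le _) hj
    have h2 : j < r := by
      by_contra h
      push_neg at h
      have h3 : 2 ^ (r + 1) ≤ 2 ^ (j + 1) :=
        Nat.pow_le_pow_right (by norm_num) (by omega)
      have h4 : (1:ℕ) ≤ 2 ^ r := Nat.one_le_two_pow
      have h5 : 2 ^ (r + 1) = 2 * 2 ^ r := by ring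
      omega
    have hne : j ≠ r - 1 := fun h => hrpred (h ▸ hjJ)
    simp only [Finset.mem_range]
    omega
  have hle : ∑ j ∈ J', (2 ^ (j + 1) - 1) ≤ ∑ j ∈ Finset.range (r - 1), (2 ^ (j + 1) - 1) :=
    Finset.sum_le_sum_of_subset hsub
  have hlt := sum_mersenne_range_lt (r - 1)
  have hr1 : r - 1 + 1 = r := by omega
  rw [hr1] at hlt
  omega
end

section
/- Let r ≥ 1 and let x = ∏_{j=0}^{r} X (j+1) ∈ R (the top class of H_*(Ratₖ; 𝔽₂) for k = 2^(r+1) − 1). Then (π_2 ⊗ id)(ψ_R(x)) = 0; that is, 2 ∉ S(x): the two terms of ψ_R(x) in first-factor dimension 2 cancel over 𝔽₂. -/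
open MvPolynomial TensorProduct

namespace Stmt16Aux

lemma mwt_add (w : ℕ → ℕ) (a b : ℕ →₀ ℕ) : mwt w (a + b) = mwt w a + mwt w b := by
  unfold mwt
  rw [Finsupp.sum_add_index]
  · intro i _; simp
  · intro i _ e e'; ring

lemma mwt_single (w : ℕ → ℕ) (i e : ℕ) : mwt w (Finsupp.single i e) = e * w i := by
  unfold mwt
  rw [Finsupp.sum_single_index]
  simp

lemma homog_zero (w : ℕ → ℕ) (s : ℕ) : Homog w s (0 : P) := by
  intro m hm; simp at hm

lemma homog_add {w : ℕ → ℕ} {s : ℕ} {p q : P} (hp : Homog w s p) (hq : Homog w s q) :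
    Homog w s (p + q) := by
  intro m hm
  rcases Finset.mem_union.1 (MvPolynomial.support_add hm) with h | h
  · exact hp m h
  · exact hq m h

lemma homog_smul {w : ℕ → ℕ} {s : ℕ} {p : P} (c : F2) (hp : Homog w s p) :
    Homog w s (c • p) := fun m hm => hp m (MvPolynomial.support_smul hm)

lemma homog_monomial (w : ℕ → ℕ) (m : ℕ →₀ ℕ) (c : F2) :
    Homog w (mwt w m) (monomial m c) := by
  intro m' hm'
  rw [MvPolynomial.support_monomial] at hm'
  split at hm'
  · simp at hm'
  · simp at hm'; subst hm'; rfl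

lemma homog_X (w : ℕ → ℕ) (i : ℕ) : Homog w (w i) (X i) := by
  have := homog_monomial w (Finsupp.single i 1) (1 : F2)
  rw [MvPolynomial.X] at *
  simpa [mwt_single] using this

lemma homog_mul {w : ℕ → ℕ} {s t : ℕ} {p q : P} (hp : Homog w s p) (hq : Homog w t q) :
    Homog w (s + t) (p * q) := by
  intro m hm
  have := MvPolynomial.support_mul p q hm
  rcases Finset.mem_add.1 this with ⟨a, ha, b, hb, hab⟩
  rw [← hab, mwt_add, hp a ha, hq b hb]

lemma homog_pow {w : ℕ → ℕ} {s : ℕ} {p : P} (hp : Homog w s p) (k : ℕ) :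
    Homog w (k * s) (p ^ k) := by
  induction k with
  | zero => simpa [mwt] using homog_monomial w 0 (1 : F2)
  | succ k ih =>
      have := homog_mul ih hp
      rw [pow_succ]
      convert this using 1
      ring

lemma homog_one (w : ℕ → ℕ) : Homog w 0 (1 : P) := by
  simpa [mwt] using homog_monomial w 0 (1 : F2)

end Stmt16Aux

namespace Stmt16Aux

lemma Q_one {Q : P →ₗ[F2] P} (hQ : IsQ Q) : Q 1 = 0 := by
  have h := hQ.2.2 1 1
  rw [mul_one] at h
  have : Q 1 = Q 1 + Q 1 := by simpa using h
  have := add_left_cancel (a := Q 1) (b := (0:P)) (c := Q 1) (by simpa using this.symm)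
  exact this.symm

lemma homog_Q_X {Q : P →ₗ[F2] P} (hQ : IsQ Q) (i : ℕ) :
    Homog dR (2 * dR i + 1) (Q (X i)) := by
  match i with
  | 0 =>
      rw [hQ.1]
      have : dR 0 = 0 := rfl
      have h := homog_mul (homog_X dR 0) (homog_X dR 1)
      simpa [dR] using h
  | j + 1 =>
      rw [hQ.2.1 j]
      have h := homog_X dR (j + 2)
      have e : dR (j + 2) = 2 * dR (j + 1) + 1 := by
        show 2 ^ (j + 2) - 1 = 2 * (2 ^ (j + 1) - 1) + 1
        have : 1 ≤ 2 ^ (j + 1) := Nat.one_le_two_pow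
        have : 2 ^ (j + 2) = 2 * 2 ^ (j + 1) := by ring
        omega
      rwa [e] at h

lemma homog_Q_X_pow {Q : P →ₗ[F2] P} (hQ : IsQ Q) (i e : ℕ) :
    Homog dR (2 * (e * dR i) + 1) (Q (X i ^ e)) := by
  induction e with
  | zero => rw [pow_zero, Q_one hQ]; exact homog_zero _ _
  | succ e ih =>
      rw [pow_succ, hQ.2.2]
      have h1 : Homog dR (2 * (e * dR i) + 2 * dR i + 1) ((X i ^ e) ^ 2 * Q (X i)) := by
        have := homog_mul (homog_pow (homog_pow (homog_X dR i) e) 2) (homog_Q_X hQ i)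
        convert this using 1 <;> ring_nf
      have h2 : Homog dR (2 * (e * dR i) + 2 * dR i + 1) (Q (X i ^ e) * (X i) ^ 2) := by
        have := homog_mul ih (homog_pow (homog_X dR i) 2)
        convert this using 1 <;> ring_nf
      have := homog_add h1 h2
      convert this using 1
      ring

lemma homog_Q_monomial {Q : P →ₗ[F2] P} (hQ : IsQ Q) (m : ℕ →₀ ℕ) :
    Homog dR (2 * mwt dR m + 1) (Q (monomial m (1 : F2))) := by
  induction m using Finsupp.induction with
  | zero =>
      have : (monomial (0 : ℕ →₀ ℕ) (1 : F2)) = (1 : P) := by simp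
      rw [this, Q_one hQ]; exact homog_zero _ _
  | single_add i e f hif he ih =>
      have hsplit : (monomial (Finsupp.single i e + f) (1 : F2)) =
          X i ^ e * monomial f 1 := by
        rw [MvPolynomial.X_pow_eq_monomial, MvPolynomial.monomial_mul, one_mul]
      rw [hsplit, hQ.2.2]
      have h1 : Homog dR (2 * mwt dR (Finsupp.single i e + f) + 1)
          ((X i ^ e) ^ 2 * Q (monomial f 1)) := by
        have := homog_mul (homog_pow (homog_pow (homog_X dR i) e) 2) ih
        convert this using 1
        rw [mwt_add, mwt_single]; ring
      have h2 : Homog dR (2 * mwt dR (Finsupp.single i e + f) + 1)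
          (Q (X i ^ e) * (monomial f (1:F2)) ^ 2) := by
        have hm2 : Homog dR (2 * mwt dR f) ((monomial f (1:F2)) ^ 2) :=
          homog_pow (homog_monomial dR f 1) 2
        have := homog_mul (homog_Q_X_pow hQ i e) hm2
        convert this using 1
        rw [mwt_add, mwt_single]; ring
      exact homog_add h1 h2

lemma homog_Q {Q : P →ₗ[F2] P} (hQ : IsQ Q) {d : ℕ} {p : P} (hp : Homog dR d p) :
    Homog dR (2 * d + 1) (Q p) := by
  have hrep : p = ∑ m ∈ p.support, monomial m (coeff m p) :=
    (MvPolynomial.support_sum_monomial_coeff p).symm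
  rw [hrep, map_sum]
  have : ∀ m ∈ p.support, Homog dR (2 * d + 1) (Q (monomial m (coeff m p))) := by
    intro m hm
    have : (monomial m (coeff m p)) = coeff m p • monomial m (1 : F2) := by
      rw [MvPolynomial.smul_monomial, smul_eq_mul, mul_one]
    rw [this, map_smul]
    have := homog_smul (coeff m p) (homog_Q_monomial hQ m)
    rwa [hp m hm] at this
  -- sum of homogeneous is homogeneous
  classical
  revert this
  generalize p.support = s
  intro hall
  induction s using Finset.induction with
  | empty => simpa using homog_zero dR (2*d+1)
  | insert a s hni ih =>
      rw [Finset.sum_insert hni]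
      exact homog_add (hall _ (Finset.mem_insert_self _ _))
        (ih fun m hm => hall m (Finset.mem_insert_of_mem hm))

lemma homog_Q_iter {Q : P →ₗ[F2] P} (hQ : IsQ Q) (i : ℕ) :
    Homog dR (2 ^ i - 1) ((⇑Q)^[i] (X 0)) := by
  induction i with
  | zero => simpa [dR] using homog_X dR 0
  | succ i ih =>
      rw [Function.iterate_succ_apply']
      have := homog_Q hQ ih
      have e : 2 * (2 ^ i - 1) + 1 = 2 ^ (i + 1) - 1 := by
        have : 1 ≤ 2 ^ i := Nat.one_le_two_pow
        have : 2 ^ (i+1) = 2 * 2 ^ i := by ring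
        omega
      rwa [e] at this

lemma pi_homog {π : ℕ → P →ₗ[F2] P} (hπ : IsPi dR π) {s t : ℕ} {a : P}
    (h : Homog dR s a) (hst : s ≠ t) : π t a = 0 := by
  have hrep : a = ∑ m ∈ a.support, monomial m (coeff m a) :=
    (MvPolynomial.support_sum_monomial_coeff a).symm
  rw [hrep, map_sum]
  refine Finset.sum_eq_zero fun m hm => ?_
  rw [hπ t m (coeff m a), if_neg]
  rw [h m hm]
  exact hst

end Stmt16Aux

namespace Stmt16Aux

noncomputable def Kp : Submodule F2 (P ⊗[F2] P) :=
  Submodule.span F2 {t | ∃ s : ℕ, ∃ a b : P, Homog dR s a ∧ t = a ⊗ₜ[F2] b}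

noncomputable def M3 : Submodule F2 (P ⊗[F2] P) :=
  Submodule.span F2 {t | ∃ s : ℕ, ∃ a b : P, 3 ≤ s ∧ Homog dR s a ∧ t = a ⊗ₜ[F2] b}

lemma tmul_mem_Kp {s : ℕ} {a b : P} (h : Homog dR s a) : a ⊗ₜ[F2] b ∈ Kp :=
  Submodule.subset_span ⟨s, a, b, h, rfl⟩

lemma tmul_mem_M3 {s : ℕ} {a b : P} (hs : 3 ≤ s) (h : Homog dR s a) : a ⊗ₜ[F2] b ∈ M3 :=
  Submodule.subset_span ⟨s, a, b, hs, h, rfl⟩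

lemma mul_left_span {T : Set (P ⊗[F2] P)} {U : Submodule F2 (P ⊗[F2] P)}
    (x : P ⊗[F2] P) (hT : ∀ y ∈ T, x * y ∈ U) {y : P ⊗[F2] P}
    (hy : y ∈ Submodule.span F2 T) : x * y ∈ U := by
  have : Submodule.span F2 T ≤ U.comap (LinearMap.mulLeft F2 x) :=
    Submodule.span_le.2 hT
  exact this hy

lemma mul_span_span {S T : Set (P ⊗[F2] P)} {U : Submodule F2 (P ⊗[F2] P)}
    (h : ∀ x ∈ S, ∀ y ∈ T, x * y ∈ U) {x y : P ⊗[F2] P}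
    (hx : x ∈ Submodule.span F2 S) (hy : y ∈ Submodule.span F2 T) : x * y ∈ U := by
  have : Submodule.span F2 S ≤ U.comap (LinearMap.mulRight F2 y) :=
    Submodule.span_le.2 fun x hxS => by
      have : x * y ∈ U := mul_left_span x (h x hxS) hy
      simpa [LinearMap.mulRight_apply] using this
  exact this hx

lemma mul_mem_Kp {x y : P ⊗[F2] P} (hx : x ∈ Kp) (hy : y ∈ Kp) : x * y ∈ Kp := by
  refine mul_span_span ?_ hx hy
  rintro _ ⟨s, a, b, ha, rfl⟩ _ ⟨s', a', b', ha', rfl⟩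
  rw [Algebra.TensorProduct.tmul_mul_tmul]
  exact tmul_mem_Kp (homog_mul ha ha')

lemma mul_Kp_M3 {x y : P ⊗[F2] P} (hx : x ∈ Kp) (hy : y ∈ M3) : x * y ∈ M3 := by
  refine mul_span_span ?_ hx hy
  rintro _ ⟨s, a, b, ha, rfl⟩ _ ⟨s', a', b', hs', ha', rfl⟩
  rw [Algebra.TensorProduct.tmul_mul_tmul]
  exact tmul_mem_M3 (by omega) (homog_mul ha ha')

lemma homog_X0_pow (n : ℕ) : Homog dR 0 (X 0 ^ n : P) := by
  have := homog_pow (homog_X dR 0) n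
  simpa [dR] using this

lemma homog_X1_pow (n : ℕ) : Homog dR n (X 1 ^ n : P) := by
  have := homog_pow (homog_X dR 1) n
  have e : dR 1 = 1 := rfl
  rw [e, mul_one] at this
  exact this

end Stmt16Aux

namespace Stmt16Aux

lemma psi_X_mem_Kp {Q : P →ₗ[F2] P} {ψ : P →ₐ[F2] P ⊗[F2] P}
    (hQ : IsQ Q) (hψ : IsPsiR Q ψ) (i : ℕ) : ψ (X (i + 1)) ∈ Kp := by
  match i with
  | 0 =>
      rw [hψ.2.1]
      exact Kp.add_mem (tmul_mem_Kp (by simpa [dR] using homog_X dR 0))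
        (tmul_mem_Kp (homog_X dR 1))
  | j + 1 =>
      rw [hψ.2.2 (j + 1) (by omega)]
      refine Kp.add_mem (Kp.add_mem (Kp.add_mem ?_ ?_) ?_) ?_
      · exact tmul_mem_Kp (homog_X0_pow _)
      · exact tmul_mem_Kp (homog_Q_iter hQ (j + 1))
      · exact tmul_mem_Kp (homog_X1_pow _)
      · exact tmul_mem_Kp (homog_X dR (j + 2))

lemma key {Q : P →ₗ[F2] P} {ψ : P →ₐ[F2] P ⊗[F2] P}
    (hQ : IsQ Q) (hψ : IsPsiR Q ψ) :
    ∀ r : ℕ, 1 ≤ r → ∃ n : ℕ, ∃ y : P, ∃ c ∈ M3,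
      ψ (∏ j ∈ Finset.range (r + 1), X (j + 1)) =
        ψ (X 1) * ψ (X 2) * ((X 0 ^ n) ⊗ₜ[F2] y) + c := by
  refine Nat.le_induction ?_ ?_
  · refine ⟨0, 1, 0, M3.zero_mem, ?_⟩
    rw [Finset.prod_range_succ, Finset.prod_range_one, map_mul]
    rw [pow_zero]
    rw [show ((1 : P) ⊗ₜ[F2] (1 : P)) = (1 : P ⊗[F2] P) from rfl, mul_one, add_zero]
  · rintro r hr ⟨n, y, c, hc, heq⟩
    have hprod : (∏ j ∈ Finset.range (r + 1 + 1), X (j + 1) : P) =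
        (∏ j ∈ Finset.range (r + 1), X (j + 1)) * X (r + 1 + 1) :=
      Finset.prod_range_succ _ _
    have hψX := hψ.2.2 (r + 1) (by omega)
    set A := ψ (X 1) * ψ (X 2) with hA
    set z := ((X 0 : P) ^ n) ⊗ₜ[F2] y with hz
    set u := ((X 0 : P) ^ (2 ^ (r + 1))) ⊗ₜ[F2] (X (r + 1 + 1) : P) with hu
    set T := (((⇑Q)^[r + 1] (X 0)) : P) ⊗ₜ[F2] ((X 1 : P) ^ (2 ^ (r + 1)))
      + ((X 1 : P) ^ (2 ^ (r + 1))) ⊗ₜ[F2] (((⇑Q)^[r + 1] (X 0)) : P)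
      + (X (r + 1 + 1) : P) ⊗ₜ[F2] ((X 0 : P) ^ (2 ^ (r + 1))) with hT
    have hψX' : ψ (X (r + 1 + 1)) = u + T := by rw [hψX, hu, hT]; ring
    have hTM : T ∈ M3 := by
      have h4 : 4 ≤ 2 ^ (r + 1) := by
        calc 4 = 2 ^ 2 := rfl
        _ ≤ 2 ^ (r + 1) := Nat.pow_le_pow_right (by norm_num) (by omega)
      refine M3.add_mem (M3.add_mem ?_ ?_) ?_
      · exact tmul_mem_M3 (by omega) (homog_Q_iter hQ (r + 1))
      · exact tmul_mem_M3 (by omega) (homog_X1_pow _)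
      · refine tmul_mem_M3 (s := dR (r + 2)) ?_ (homog_X dR (r + 2))
        show 3 ≤ 2 ^ (r + 2) - 1
        have : 2 ^ (r + 1) ≤ 2 ^ (r + 2) := Nat.pow_le_pow_right (by norm_num) (by omega)
        omega
    have hAK : A ∈ Kp := mul_mem_Kp (psi_X_mem_Kp hQ hψ 0) (psi_X_mem_Kp hQ hψ 1)
    have hzK : z ∈ Kp := tmul_mem_Kp (homog_X0_pow n)
    refine ⟨n + 2 ^ (r + 1), y * X (r + 1 + 1),
      A * z * T + c * ψ (X (r + 1 + 1)), ?_, ?_⟩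
    · exact M3.add_mem (mul_Kp_M3 (mul_mem_Kp hAK hzK) hTM)
        (by rw [mul_comm]; exact mul_Kp_M3 (psi_X_mem_Kp hQ hψ (r + 1)) hc)
    · rw [hprod, map_mul, heq]
      have hzu : z * u = (X 0 ^ (n + 2 ^ (r + 1))) ⊗ₜ[F2] (y * X (r + 1 + 1)) := by
        rw [hz, hu, Algebra.TensorProduct.tmul_mul_tmul, ← pow_add]
      calc (A * z + c) * ψ (X (r + 1 + 1))
          = A * (z * u) + (A * z * T + c * ψ (X (r + 1 + 1))) := by
            rw [hψX']; ring
        _ = A * ((X 0 ^ (n + 2 ^ (r + 1))) ⊗ₜ[F2] (y * X (r + 1 + 1)))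
            + (A * z * T + c * ψ (X (r + 1 + 1))) := by rw [hzu]

lemma add_self_tensor (t : P ⊗[F2] P) : t + t = 0 := by
  rw [← two_smul F2 t, show (2 : F2) = 0 by decide, zero_smul]

end Stmt16Aux
/-- Let `r ≥ 1` and `x = ∏_{j=0}^{r} X (j+1) ∈ R` (the top class of
`H_*(Ratₖ; 𝔽₂)` for `k = 2^(r+1) − 1`).  Then `(π_2 ⊗ id)(ψ_R(x)) = 0`, i.e.
`2 ∉ S(x)`: the two terms of `ψ_R(x)` in first-factor dimension `2` cancel over 𝔽₂. -/
theorem psiR_dim_two_component_vanishes (r : ℕ) (hr : 1 ≤ r)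
    (Q : P →ₗ[F2] P) (hQ : IsQ Q)
    (ψ : P →ₐ[F2] P ⊗[F2] P) (hψ : IsPsiR Q ψ)
    (π : ℕ → P →ₗ[F2] P) (hπ : IsPi dR π)
    (x : P) (hx : x = ∏ j ∈ Finset.range (r + 1), X (j + 1)) :
    TensorProduct.map (π 2) (LinearMap.id : P →ₗ[F2] P) (ψ x) = 0 := by
  classical
  open Stmt16Aux in
  obtain ⟨n, y, c, hc, heq⟩ := Stmt16Aux.key hQ hψ r hr
  subst hx
  rw [heq, map_add]
  set L := TensorProduct.map (π 2) (LinearMap.id : P →ₗ[F2] P) with hL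
  have hker : ∀ t ∈ Stmt16Aux.M3, L t = 0 := by
    intro t ht
    refine (Submodule.span_le.2 ?_ : Stmt16Aux.M3 ≤ LinearMap.ker L) ht
    rintro _ ⟨s, a, b, hs, ha, rfl⟩
    simp only [SetLike.mem_coe, LinearMap.mem_ker, hL, TensorProduct.map_tmul,
      LinearMap.id_coe, id_eq]
    rw [Stmt16Aux.pi_homog hπ ha (by omega), TensorProduct.zero_tmul]
  rw [hker c hc, add_zero]
  have hψ2 : ψ (X 2) = ((X 0 : P) ^ 2) ⊗ₜ[F2] (X 2 : P)
      + ((X 0 * X 1 : P)) ⊗ₜ[F2] ((X 1 : P) ^ 2)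
      + ((X 1 : P) ^ 2) ⊗ₜ[F2] ((X 0 * X 1 : P))
      + (X 2 : P) ⊗ₜ[F2] ((X 0 : P) ^ 2) := by
    simpa [hQ.1] using hψ.2.2 1 le_rfl
  have expand : ψ (X 1) * ψ (X 2) * (((X 0 : P) ^ n) ⊗ₜ[F2] y) =
      (X 0 * X 0 ^ 2 * X 0 ^ n : P) ⊗ₜ[F2] (X 1 * X 2 * y : P)
      + (X 0 * (X 0 * X 1) * X 0 ^ n : P) ⊗ₜ[F2] (X 1 * X 1 ^ 2 * y : P)
      + (X 0 * X 2 * X 0 ^ n : P) ⊗ₜ[F2] (X 1 * X 0 ^ 2 * y : P)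
      + (X 1 * X 0 ^ 2 * X 0 ^ n : P) ⊗ₜ[F2] (X 0 * X 2 * y : P)
      + (X 1 * X 1 ^ 2 * X 0 ^ n : P) ⊗ₜ[F2] (X 0 * (X 0 * X 1) * y : P)
      + (X 1 * X 2 * X 0 ^ n : P) ⊗ₜ[F2] (X 0 * X 0 ^ 2 * y : P)
      + ((X 0 * X 1 ^ 2 * X 0 ^ n : P) ⊗ₜ[F2] (X 1 * (X 0 * X 1) * y : P)
        + (X 1 * (X 0 * X 1) * X 0 ^ n : P) ⊗ₜ[F2] (X 0 * X 1 ^ 2 * y : P)) := by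
    rw [hψ.2.1, hψ2]
    simp only [add_mul, mul_add, Algebra.TensorProduct.tmul_mul_tmul]
    abel
  have hpair : (X 0 * X 1 ^ 2 * X 0 ^ n : P) ⊗ₜ[F2] (X 1 * (X 0 * X 1) * y : P)
      + (X 1 * (X 0 * X 1) * X 0 ^ n : P) ⊗ₜ[F2] (X 0 * X 1 ^ 2 * y : P) = 0 := by
    rw [show (X 1 * (X 0 * X 1) * X 0 ^ n : P) = X 0 * X 1 ^ 2 * X 0 ^ n by ring,
      show (X 1 * (X 0 * X 1) * y : P) = X 0 * X 1 ^ 2 * y by ring]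
    exact Stmt16Aux.add_self_tensor _
  rw [expand, hpair, add_zero]
  have e1 : π 2 (X 0 * X 0 ^ 2 * X 0 ^ n : P) = 0 :=
    Stmt16Aux.pi_homog hπ (Stmt16Aux.homog_mul (Stmt16Aux.homog_mul
      (Stmt16Aux.homog_X dR 0) (Stmt16Aux.homog_X0_pow 2)) (Stmt16Aux.homog_X0_pow n))
      (by decide)
  have e2 : π 2 (X 0 * (X 0 * X 1) * X 0 ^ n : P) = 0 :=
    Stmt16Aux.pi_homog hπ (Stmt16Aux.homog_mul (Stmt16Aux.homog_mul
      (Stmt16Aux.homog_X dR 0) (Stmt16Aux.homog_mul (Stmt16Aux.homog_X dR 0)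
        (Stmt16Aux.homog_X dR 1))) (Stmt16Aux.homog_X0_pow n)) (by decide)
  have e3 : π 2 (X 0 * X 2 * X 0 ^ n : P) = 0 :=
    Stmt16Aux.pi_homog hπ (Stmt16Aux.homog_mul (Stmt16Aux.homog_mul
      (Stmt16Aux.homog_X dR 0) (Stmt16Aux.homog_X dR 2)) (Stmt16Aux.homog_X0_pow n))
      (by decide)
  have e4 : π 2 (X 1 * X 0 ^ 2 * X 0 ^ n : P) = 0 :=
    Stmt16Aux.pi_homog hπ (Stmt16Aux.homog_mul (Stmt16Aux.homog_mul
      (Stmt16Aux.homog_X dR 1) (Stmt16Aux.homog_X0_pow 2)) (Stmt16Aux.homog_X0_pow n))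
      (by decide)
  have e5 : π 2 (X 1 * X 1 ^ 2 * X 0 ^ n : P) = 0 :=
    Stmt16Aux.pi_homog hπ (Stmt16Aux.homog_mul (Stmt16Aux.homog_mul
      (Stmt16Aux.homog_X dR 1) (Stmt16Aux.homog_X1_pow 2)) (Stmt16Aux.homog_X0_pow n))
      (by decide)
  have e6 : π 2 (X 1 * X 2 * X 0 ^ n : P) = 0 :=
    Stmt16Aux.pi_homog hπ (Stmt16Aux.homog_mul (Stmt16Aux.homog_mul
      (Stmt16Aux.homog_X dR 1) (Stmt16Aux.homog_X dR 2)) (Stmt16Aux.homog_X0_pow n))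
      (by decide)
  simp only [hL, map_add, TensorProduct.map_tmul, LinearMap.id_coe, id_eq,
    e1, e2, e3, e4, e5, e6, TensorProduct.zero_tmul, add_zero, zero_add]
end

section
/- Let r ≥ 2 and let x = ∏_{j=0}^{r} X (j+1) ∈ R (the top class of H_*(Ratₖ; 𝔽₂) for k = 2^(r+1) − 1). Then (π_5 ⊗ id)(ψ_R(x)) = ((X 0)²·(X 1)⁵·∏_{j=3}^{r} (X 0)^(2^j)) ⊗ (((X 0)³·(X 2)² + (X 0)·(X 1)⁶)·∏_{j=3}^{r} X (j+1)), and this element is nonzero; that is, 5 ∈ S(x). (Here the products over 3 ≤ j ≤ r are empty when r = 2.) -/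
open MvPolynomial TensorProduct

namespace Stmt17Aux

lemma weight_eq_mwt (w : ℕ → ℕ) (m : ℕ →₀ ℕ) : Finsupp.weight w m = mwt w m := by
  simp [Finsupp.weight_apply, mwt, smul_eq_mul]

section
variable {π : ℕ → P →ₗ[F2] P} (hπ : IsPi dR π)

include hπ

lemma pi_self {p : P} {s : ℕ} (hp : p.IsWeightedHomogeneous dR s) : π s p = p := by
  conv_lhs => rw [p.as_sum]
  rw [map_sum]
  conv_rhs => rw [p.as_sum]
  refine Finset.sum_congr rfl fun m hm => ?_
  rw [hπ s m _, if_pos]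
  rw [← weight_eq_mwt]
  exact hp (mem_support_iff.mp hm)

lemma pi_ne {p : P} {s t : ℕ} (hp : p.IsWeightedHomogeneous dR t) (h : t ≠ s) :
    π s p = 0 := by
  conv_lhs => rw [p.as_sum]
  rw [map_sum]
  refine Finset.sum_eq_zero fun m hm => ?_
  rw [hπ s m _, if_neg]
  rw [← weight_eq_mwt]
  rw [hp (mem_support_iff.mp hm)]
  exact h

lemma pi_mul_homog {c : P} {t s : ℕ} (hc : c.IsWeightedHomogeneous dR t) (hts : t ≤ s)
    (a : P) : π s (a * c) = π (s - t) a * c := by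
  conv_lhs => rw [a.as_sum]
  conv_rhs => rw [a.as_sum]
  rw [Finset.sum_mul, map_sum, map_sum, Finset.sum_mul]
  refine Finset.sum_congr rfl fun m hm => ?_
  have hmon : (monomial m (a.coeff m)).IsWeightedHomogeneous dR (mwt dR m) :=
    isWeightedHomogeneous_monomial _ _ _ (weight_eq_mwt _ _)
  rw [hπ (s - t) m _]
  have hmul := hmon.mul hc
  by_cases h : mwt dR m = s - t
  · rw [if_pos h]
    exact pi_self hπ (show _ from by rw [h, Nat.sub_add_cancel hts] at hmul; exact hmul)
  · rw [if_neg h, zero_mul]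
    exact pi_ne hπ hmul (by omega)

end

section
variable {π : ℕ → P →ₗ[F2] P} (hπ : IsPi dR π)
include hπ

lemma pi_mul_kill {c : P} {t s : ℕ} (hc : c.IsWeightedHomogeneous dR t) (hst : s < t)
    (a : P) : π s (a * c) = 0 := by
  conv_lhs => rw [a.as_sum]
  rw [Finset.sum_mul, map_sum]
  refine Finset.sum_eq_zero fun m hm => ?_
  have hmon : (monomial m (a.coeff m)).IsWeightedHomogeneous dR (mwt dR m) :=
    isWeightedHomogeneous_monomial _ _ _ (weight_eq_mwt _ _)
  exact pi_ne hπ (hmon.mul hc) (by omega)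

lemma tmap_mul_homog {c : P} {t s : ℕ} (hc : c.IsWeightedHomogeneous dR t) (hts : t ≤ s)
    (d : P) (z : P ⊗[F2] P) :
    TensorProduct.map (π s) LinearMap.id (z * (c ⊗ₜ[F2] d)) =
      TensorProduct.map (π (s - t)) LinearMap.id z * (c ⊗ₜ[F2] d) := by
  induction z using TensorProduct.induction_on with
  | zero => simp
  | tmul a b =>
      rw [Algebra.TensorProduct.tmul_mul_tmul, map_tmul, map_tmul,
        Algebra.TensorProduct.tmul_mul_tmul, pi_mul_homog hπ hc hts]
      rfl
  | add u v hu hv => rw [add_mul, map_add, hu, hv, map_add, add_mul]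

lemma tmap_mul_kill {c : P} {t s : ℕ} (hc : c.IsWeightedHomogeneous dR t) (hst : s < t)
    (d : P) (z : P ⊗[F2] P) :
    TensorProduct.map (π s) LinearMap.id (z * (c ⊗ₜ[F2] d)) = 0 := by
  induction z using TensorProduct.induction_on with
  | zero => simp
  | tmul a b =>
      rw [Algebra.TensorProduct.tmul_mul_tmul, map_tmul, pi_mul_kill hπ hc hst,
        TensorProduct.zero_tmul]
  | add u v hu hv => rw [add_mul, map_add, hu, hv, add_zero]

end

lemma F2_add_self {M : Type*} [AddCommMonoid M] [Module F2 M] (x : M) : x + x = 0 := by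
  have h2 : ((1 : F2) + 1) = 0 := by decide
  calc x + x = ((1:F2) + 1) • x := by rw [add_smul, one_smul]
  _ = 0 := by rw [h2, zero_smul]

lemma IsWH_of_eq {w : ℕ → ℕ} {p : P} {n m : ℕ} (h : p.IsWeightedHomogeneous w n)
    (e : n = m) : p.IsWeightedHomogeneous w m := e ▸ h

lemma mwt_add (w : ℕ → ℕ) (m m' : ℕ →₀ ℕ) : mwt w (m + m') = mwt w m + mwt w m' := by
  simp only [← weight_eq_mwt, map_add]

lemma mwt_single (w : ℕ → ℕ) (a b : ℕ) : mwt w (Finsupp.single a b) = b * w a := by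
  simp [mwt, Finsupp.sum_single_index]

lemma hXpow (i k : ℕ) : ((X i : P) ^ k).IsWeightedHomogeneous dR (k * dR i) := by
  rw [X_pow_eq_monomial]
  exact isWeightedHomogeneous_monomial _ _ _ (by rw [weight_eq_mwt, mwt_single])

lemma hX (i : ℕ) : (X i : P).IsWeightedHomogeneous dR (dR i) :=
  isWeightedHomogeneous_X _ _ _

lemma hXpow2 (a b : ℕ) : (((X a : P) ^ b) ^ 2).IsWeightedHomogeneous dR (2 * (b * dR a)) := by
  rw [← pow_mul]
  exact IsWH_of_eq (hXpow a (b * 2)) (by ring)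

lemma hmon2 (f : ℕ →₀ ℕ) : ((monomial f (1:F2)) ^ 2).IsWeightedHomogeneous dR (2 * mwt dR f) := by
  rw [monomial_pow, one_pow]
  refine isWeightedHomogeneous_monomial _ _ _ ?_
  rw [map_nsmul, weight_eq_mwt]
  simp [mul_comm]

section
variable {Q : P →ₗ[F2] P} (hQ : IsQ Q)
include hQ

lemma Q_one : Q 1 = 0 := by
  have h := hQ.2.2 1 1
  rw [mul_one, one_pow, one_mul, mul_one, F2_add_self] at h
  exact h

lemma Q_X_deg (a : ℕ) : (Q (X a)).IsWeightedHomogeneous dR (2 * dR a + 1) := by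
  match a with
  | 0 =>
    rw [hQ.1]
    exact IsWH_of_eq ((hX 0).mul (hX 1)) (by simp [dR])
  | i + 1 =>
    rw [hQ.2.1 i]
    refine IsWH_of_eq (hX (i + 2)) ?_
    show 2 ^ (i + 2) - 1 = 2 * (2 ^ (i + 1) - 1) + 1
    have h1 : (1:ℕ) ≤ 2 ^ (i + 1) := Nat.one_le_two_pow
    have h2 : (2:ℕ) ^ (i + 2) = 2 * 2 ^ (i + 1) := by ring
    omega

lemma Q_Xpow_deg (a b : ℕ) : (Q ((X a : P) ^ b)).IsWeightedHomogeneous dR (2 * (b * dR a) + 1) := by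
  induction b with
  | zero => rw [pow_zero, Q_one hQ]; exact isWeightedHomogeneous_zero _ _ _
  | succ b ih =>
    rw [pow_succ', hQ.2.2]
    have t1 : ((X a : P) ^ 2 * Q ((X a) ^ b)).IsWeightedHomogeneous dR (2 * ((b+1) * dR a) + 1) :=
      IsWH_of_eq ((hXpow a 2).mul ih) (by ring)
    have t2 : (Q (X a) * ((X a : P) ^ b) ^ 2).IsWeightedHomogeneous dR (2 * ((b+1) * dR a) + 1) :=
      IsWH_of_eq ((Q_X_deg hQ a).mul (hXpow2 a b)) (by ring)
    exact t1.add t2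

lemma Q_monomial_deg (m : ℕ →₀ ℕ) :
    (Q (monomial m (1:F2))).IsWeightedHomogeneous dR (2 * mwt dR m + 1) := by
  induction m using Finsupp.induction with
  | zero =>
    rw [show (monomial (0 : ℕ →₀ ℕ) (1:F2)) = 1 from rfl, Q_one hQ]
    exact isWeightedHomogeneous_zero _ _ _
  | single_add a b f ha hb ih =>
    have hrw : (monomial (Finsupp.single a b + f) (1:F2)) = (X a) ^ b * monomial f 1 := by
      rw [X_pow_eq_monomial, monomial_mul, one_mul]
    have hD : 2 * mwt dR (Finsupp.single a b + f) + 1 = 2 * (b * dR a) + (2 * mwt dR f + 1) := by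
      rw [mwt_add, mwt_single]; ring
    rw [hrw, hQ.2.2, hD]
    have t1 : (((X a : P) ^ b) ^ 2 * Q (monomial f 1)).IsWeightedHomogeneous dR
        (2 * (b * dR a) + (2 * mwt dR f + 1)) := (hXpow2 a b).mul ih
    have t2 : (Q ((X a : P) ^ b) * (monomial f (1:F2)) ^ 2).IsWeightedHomogeneous dR
        (2 * (b * dR a) + (2 * mwt dR f + 1)) :=
      IsWH_of_eq ((Q_Xpow_deg hQ a b).mul (hmon2 f)) (by ring)
    exact t1.add t2

lemma Q_homog {p : P} {d : ℕ} (hp : p.IsWeightedHomogeneous dR d) :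
    (Q p).IsWeightedHomogeneous dR (2 * d + 1) := by
  conv_lhs => rw [p.as_sum]
  rw [map_sum]
  refine IsWeightedHomogeneous.sum _ _ _ fun m hm => ?_
  have h1 : (monomial m (p.coeff m)) = (p.coeff m) • monomial m (1:F2) := by
    rw [smul_monomial, smul_eq_mul, mul_one]
  rw [h1, map_smul]
  have h2 := Q_monomial_deg hQ m
  rw [← weight_eq_mwt] at h2
  rw [hp (mem_support_iff.mp hm)] at h2
  exact (mem_weightedHomogeneousSubmodule _ _ _ _).mp
    (Submodule.smul_mem _ _ ((mem_weightedHomogeneousSubmodule _ _ _ _).mpr h2))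

lemma Q_iter_deg (n : ℕ) : ((⇑Q)^[n] (X 0)).IsWeightedHomogeneous dR (2 ^ n - 1) := by
  induction n with
  | zero => exact IsWH_of_eq (hX 0) rfl
  | succ n ih =>
    rw [Function.iterate_succ_apply']
    refine IsWH_of_eq (Q_homog hQ ih) ?_
    have h1 : (1:ℕ) ≤ 2 ^ n := Nat.one_le_two_pow
    have h2 : (2:ℕ) ^ (n + 1) = 2 * 2 ^ n := by ring
    omega
end

section
variable {Q : P →ₗ[F2] P} (hQ : IsQ Q) {ψ : P →ₐ[F2] P ⊗[F2] P} (hψ : IsPsiR Q ψ)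
  {π : ℕ → P →ₗ[F2] P} (hπ : IsPi dR π)

-- convenient homogeneity facts
lemma hX0pow (k : ℕ) : ((X 0 : P) ^ k).IsWeightedHomogeneous dR 0 :=
  IsWH_of_eq (hXpow 0 k) (by simp [dR])
lemma hX1 : (X 1 : P).IsWeightedHomogeneous dR 1 := IsWH_of_eq (hX 1) (by norm_num [dR])
lemma hX1pow (k : ℕ) : ((X 1 : P) ^ k).IsWeightedHomogeneous dR k :=
  IsWH_of_eq (hXpow 1 k) (by norm_num [dR])
lemma hX2 : (X 2 : P).IsWeightedHomogeneous dR 3 := IsWH_of_eq (hX 2) (by norm_num [dR])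
lemma hX01 : ((X 0 : P) * X 1).IsWeightedHomogeneous dR 1 :=
  IsWH_of_eq ((hX 0).mul (hX 1)) (by norm_num [dR])

include hQ in
lemma Qsq : (⇑Q)^[2] (X 0) = (X 0 : P) ^ 2 * X 2 + X 0 * X 1 ^ 3 := by
  have h0 : (⇑Q)^[2] (X 0) = Q (Q (X 0)) := by
    rw [Function.iterate_succ_apply', Function.iterate_one]
  rw [h0, hQ.1, hQ.2.2, hQ.2.1 0, hQ.1]
  ring

include hQ in
lemma hc2 : ((X 0 : P) ^ 2 * X 2 + X 0 * X 1 ^ 3).IsWeightedHomogeneous dR 3 := by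
  have h := Q_iter_deg hQ 2
  rw [Qsq hQ] at h
  exact IsWH_of_eq h (by norm_num)

include hQ hψ hπ in
lemma base_case :
    TensorProduct.map (π 5) (LinearMap.id : P →ₗ[F2] P) (ψ (X 1 * X 2 * X 3)) =
      ((X 0) ^ 2 * (X 1) ^ 5) ⊗ₜ[F2] ((X 0) ^ 3 * (X 2) ^ 2 + X 0 * (X 1) ^ 6) := by
  have hψ2 : ψ (X 2) = ((X 0 : P) ^ 2) ⊗ₜ[F2] (X 2 : P) + ((X 0 : P) * X 1) ⊗ₜ[F2] ((X 1 : P) ^ 2)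
      + ((X 1 : P) ^ 2) ⊗ₜ[F2] ((X 0 : P) * X 1) + (X 2 : P) ⊗ₜ[F2] ((X 0 : P) ^ 2) := by
    have h := hψ.2.2 1 le_rfl
    rw [Function.iterate_one, hQ.1] at h
    norm_num at h ⊢
    exact h
  have hψ3 : ψ (X 3) = ((X 0 : P) ^ 4) ⊗ₜ[F2] (X 3 : P)
      + ((X 0 : P) ^ 2 * X 2 + X 0 * X 1 ^ 3) ⊗ₜ[F2] ((X 1 : P) ^ 4)
      + ((X 1 : P) ^ 4) ⊗ₜ[F2] ((X 0 : P) ^ 2 * X 2 + X 0 * X 1 ^ 3)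
      + (X 3 : P) ⊗ₜ[F2] ((X 0 : P) ^ 4) := by
    have h := hψ.2.2 2 (by norm_num)
    rw [Qsq hQ] at h
    norm_num at h ⊢
    exact h
  -- projections of z1
  have hz1 : ∀ s : ℕ, TensorProduct.map (π s) (LinearMap.id : P →ₗ[F2] P) (ψ (X 1)) =
      (π s (X 0)) ⊗ₜ[F2] (X 1) + (π s (X 1)) ⊗ₜ[F2] (X 0) := by
    intro s
    rw [hψ.2.1, map_add, map_tmul, map_tmul]
    rfl
  have hX0s : ∀ s : ℕ, s ≠ 0 → π s (X 0 : P) = 0 := fun s hs =>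
    pi_ne hπ (IsWH_of_eq (hX 0) (by simp [dR])) (Ne.symm hs)
  have hX1s : ∀ s : ℕ, s ≠ 1 → π s (X 1 : P) = 0 := fun s hs => pi_ne hπ hX1 (Ne.symm hs)
  have hz15 : TensorProduct.map (π 5) (LinearMap.id : P →ₗ[F2] P) (ψ (X 1)) = 0 := by
    rw [hz1 5, hX0s 5 (by norm_num), hX1s 5 (by norm_num)]; simp
  have hz14 : TensorProduct.map (π 4) (LinearMap.id : P →ₗ[F2] P) (ψ (X 1)) = 0 := by
    rw [hz1 4, hX0s 4 (by norm_num), hX1s 4 (by norm_num)]; simp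
  have hz13 : TensorProduct.map (π 3) (LinearMap.id : P →ₗ[F2] P) (ψ (X 1)) = 0 := by
    rw [hz1 3, hX0s 3 (by norm_num), hX1s 3 (by norm_num)]; simp
  have hz12 : TensorProduct.map (π 2) (LinearMap.id : P →ₗ[F2] P) (ψ (X 1)) = 0 := by
    rw [hz1 2, hX0s 2 (by norm_num), hX1s 2 (by norm_num)]; simp
  have hz11 : TensorProduct.map (π 1) (LinearMap.id : P →ₗ[F2] P) (ψ (X 1)) =
      (X 1 : P) ⊗ₜ[F2] (X 0) := by
    rw [hz1 1, hX0s 1 (by norm_num), pi_self hπ hX1]; simp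
  have hz10 : TensorProduct.map (π 0) (LinearMap.id : P →ₗ[F2] P) (ψ (X 1)) =
      (X 0 : P) ⊗ₜ[F2] (X 1) := by
    rw [hz1 0, pi_self hπ (IsWH_of_eq (hX 0) (by simp [dR])), hX1s 0 (by norm_num)]; simp
  -- components of ψ(X1)·ψ(X2)
  have hE5 : TensorProduct.map (π 5) (LinearMap.id : P →ₗ[F2] P) (ψ (X 1) * ψ (X 2)) = 0 := by
    rw [hψ2, mul_add, mul_add, mul_add, map_add, map_add, map_add,
      tmap_mul_homog hπ (hX0pow 2) (by norm_num),
      tmap_mul_homog hπ hX01 (by norm_num),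
      tmap_mul_homog hπ (hX1pow 2) (by norm_num),
      tmap_mul_homog hπ hX2 (by norm_num)]
    simp only [Nat.sub_zero, show (5:ℕ)-1 = 4 by norm_num, show (5:ℕ)-2 = 3 by norm_num,
      show (5:ℕ)-3 = 2 by norm_num, hz15, hz14, hz13, hz12]
    simp
  have hE2 : TensorProduct.map (π 2) (LinearMap.id : P →ₗ[F2] P) (ψ (X 1) * ψ (X 2)) = 0 := by
    rw [hψ2, mul_add, mul_add, mul_add, map_add, map_add, map_add,
      tmap_mul_homog hπ (hX0pow 2) (by norm_num),
      tmap_mul_homog hπ hX01 (by norm_num),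
      tmap_mul_homog hπ (hX1pow 2) (by norm_num),
      tmap_mul_kill hπ hX2 (by norm_num)]
    simp only [Nat.sub_zero, show (2:ℕ)-1 = 1 by norm_num, show (2:ℕ)-2 = 0 by norm_num,
      hz12, hz11, hz10, zero_mul, add_zero, zero_add,
      Algebra.TensorProduct.tmul_mul_tmul]
    have e : (X 1 : P) * (X 0 * X 1) = X 0 * X 1 ^ 2 := by ring
    rw [e]
    exact F2_add_self _
  have hE1 : TensorProduct.map (π 1) (LinearMap.id : P →ₗ[F2] P) (ψ (X 1) * ψ (X 2)) =
      ((X 1 : P) * X 0 ^ 2) ⊗ₜ[F2] ((X 0 : P) * X 2)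
        + ((X 0 : P) * (X 0 * X 1)) ⊗ₜ[F2] ((X 1 : P) * X 1 ^ 2) := by
    rw [hψ2, mul_add, mul_add, mul_add, map_add, map_add, map_add,
      tmap_mul_homog hπ (hX0pow 2) (by norm_num),
      tmap_mul_homog hπ hX01 (by norm_num),
      tmap_mul_kill hπ (hX1pow 2) (by norm_num),
      tmap_mul_kill hπ hX2 (by norm_num)]
    simp only [Nat.sub_zero, show (1:ℕ)-1 = 0 by norm_num,
      hz11, hz10, add_zero, Algebra.TensorProduct.tmul_mul_tmul]
  -- assemble
  have hsplit : ψ (X 1 * X 2 * X 3) = (ψ (X 1) * ψ (X 2)) * ψ (X 3) := by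
    rw [map_mul, map_mul]
  rw [hsplit, hψ3, mul_add, mul_add, mul_add, map_add, map_add, map_add,
    tmap_mul_homog hπ (hX0pow 4) (by norm_num),
    tmap_mul_homog hπ (hc2 hQ) (by norm_num),
    tmap_mul_homog hπ (hX1pow 4) (by norm_num),
    tmap_mul_kill hπ (show (X 3 : P).IsWeightedHomogeneous dR 7 from IsWH_of_eq (hX 3) (by norm_num [dR])) (by norm_num)]
  simp only [Nat.sub_zero, show (5:ℕ)-3 = 2 by norm_num, show (5:ℕ)-4 = 1 by norm_num,
    hE5, hE2, hE1, zero_mul, zero_add, add_zero, add_mul,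
    Algebra.TensorProduct.tmul_mul_tmul]
  have e1 : (X 1 : P) * X 0 ^ 2 * X 1 ^ 4 = X 0 ^ 2 * X 1 ^ 5 := by ring
  have e2 : (X 0 : P) * (X 0 * X 1) * X 1 ^ 4 = X 0 ^ 2 * X 1 ^ 5 := by ring
  rw [e1, e2, ← TensorProduct.tmul_add]
  congr 1
  have e3 : (X 0 : P) * X 2 * (X 0 ^ 2 * X 2 + X 0 * X 1 ^ 3)
      + (X 1 : P) * X 1 ^ 2 * (X 0 ^ 2 * X 2 + X 0 * X 1 ^ 3)
      = (X 0 ^ 3 * X 2 ^ 2 + X 0 * X 1 ^ 6)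
        + ((X 0 ^ 2 * X 1 ^ 3 * X 2) + (X 0 ^ 2 * X 1 ^ 3 * X 2)) := by ring
  rw [e3, F2_add_self, add_zero]
end

section
variable {Q : P →ₗ[F2] P} (hQ : IsQ Q) {ψ : P →ₐ[F2] P ⊗[F2] P} (hψ : IsPsiR Q ψ)
  {π : ℕ → P →ₗ[F2] P} (hπ : IsPi dR π)

include hQ hψ hπ in
lemma main_eq : ∀ n : ℕ, 2 ≤ n →
    TensorProduct.map (π 5) (LinearMap.id : P →ₗ[F2] P)
        (ψ (∏ j ∈ Finset.range (n + 1), X (j + 1))) =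
      ((X 0) ^ 2 * (X 1) ^ 5 * ∏ j ∈ Finset.Icc 3 n, (X 0) ^ (2 ^ j)) ⊗ₜ[F2]
        (((X 0) ^ 3 * (X 2) ^ 2 + X 0 * (X 1) ^ 6) * ∏ j ∈ Finset.Icc 3 n, X (j + 1)) := by
  intro n hn
  induction n, hn using Nat.le_induction with
  | base =>
    have h3 : (∏ j ∈ Finset.range 3, (X (j + 1) : P)) = X 1 * X 2 * X 3 := by
      rw [Finset.prod_range_succ, Finset.prod_range_succ, Finset.prod_range_one]
    rw [h3, base_case hQ hψ hπ, Finset.Icc_eq_empty (by norm_num)]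
    simp
  | succ n hn ih =>
    have hpow : (8:ℕ) ≤ 2 ^ (n + 1) := by
      calc (8:ℕ) = 2 ^ 3 := by norm_num
      _ ≤ 2 ^ (n + 1) := Nat.pow_le_pow_right (by norm_num) (by omega)
    have hpow2 : (2:ℕ) ^ (n + 2) = 2 * 2 ^ (n + 1) := by ring
    rw [Finset.prod_range_succ, map_mul, hψ.2.2 (n + 1) (by omega),
      mul_add, mul_add, mul_add, map_add, map_add, map_add,
      tmap_mul_homog hπ (hX0pow (2 ^ (n + 1))) (by norm_num),
      tmap_mul_kill hπ (Q_iter_deg hQ (n + 1)) (by omega),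
      tmap_mul_kill hπ (show ((X 1 : P) ^ (2 ^ (n + 1))).IsWeightedHomogeneous dR (2 ^ (n + 1))
        from hX1pow _) (by omega),
      tmap_mul_kill hπ (show (X (n + 1 + 1) : P).IsWeightedHomogeneous dR (2 ^ (n + 2) - 1)
        from IsWH_of_eq (hX (n + 1 + 1)) rfl) (by omega)]
    rw [Nat.sub_zero, ih, add_zero, add_zero, add_zero,
      Algebra.TensorProduct.tmul_mul_tmul,
      Finset.prod_Icc_succ_top (show 3 ≤ n + 1 by omega),
      Finset.prod_Icc_succ_top (show 3 ≤ n + 1 by omega), ← mul_assoc, ← mul_assoc]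
end

lemma first_factor_ne : ((X 0 : P) ^ 3 * (X 2) ^ 2 + X 0 * (X 1) ^ 6) ≠ 0 := by
  intro h
  have hc : coeff (Finsupp.single 0 1 + Finsupp.single 1 6)
      ((X 0 : P) ^ 3 * (X 2) ^ 2 + X 0 * (X 1) ^ 6) = 1 := by
    have e1 : (X 0 : P) ^ 3 * (X 2) ^ 2
        = monomial (Finsupp.single 0 3 + Finsupp.single 2 2) 1 := by
      rw [X_pow_eq_monomial, X_pow_eq_monomial, monomial_mul, one_mul]
    have e2 : (X 0 : P) * (X 1) ^ 6
        = monomial (Finsupp.single 0 1 + Finsupp.single 1 6) 1 := by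
      rw [show (X 0 : P) = X 0 ^ 1 from (pow_one _).symm, X_pow_eq_monomial,
        X_pow_eq_monomial, monomial_mul, one_mul]
    rw [e1, e2, coeff_add, coeff_monomial, coeff_monomial, if_neg, if_pos rfl, zero_add]
    intro hne
    have := DFunLike.congr_fun hne 1
    simp [Finsupp.single_apply] at this
  rw [h, coeff_zero] at hc
  simp at hc

lemma nonzero_part (r : ℕ) :
    (((X 0) ^ 2 * (X 1) ^ 5 * ∏ j ∈ Finset.Icc 3 r, (X 0) ^ (2 ^ j)) ⊗ₜ[F2]
        (((X 0) ^ 3 * (X 2) ^ 2 + X 0 * (X 1) ^ 6) * ∏ j ∈ Finset.Icc 3 r, X (j + 1))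
      : P ⊗[F2] P) ≠ 0 := by
  intro h0
  have hb : (((X 0 : P) ^ 3 * (X 2) ^ 2 + X 0 * (X 1) ^ 6)
      * ∏ j ∈ Finset.Icc 3 r, (X (j + 1) : P)) ≠ 0 :=
    mul_ne_zero first_factor_ne
      (Finset.prod_ne_zero_iff.mpr fun j _ => X_ne_zero _)
  have := congrArg (fun t => (TensorProduct.lid F2 P)
    (TensorProduct.map ((aeval (fun _ => (1:F2))).toLinearMap)
      (LinearMap.id : P →ₗ[F2] P) t)) h0
  simp only [TensorProduct.map_tmul, AlgHom.toLinearMap_apply, LinearMap.id_coe, id_eq,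
    map_zero, TensorProduct.lid_tmul] at this
  rw [show (aeval (fun _ => (1:F2)))
      ((X 0 : P) ^ 2 * (X 1) ^ 5 * ∏ j ∈ Finset.Icc 3 r, (X 0) ^ (2 ^ j)) = 1 by
    simp [map_prod]] at this
  rw [one_smul] at this
  exact hb this

end Stmt17Aux

/-- Let `r ≥ 2` and `x = ∏_{j=0}^{r} X (j+1) ∈ R` (the top class of
`H_*(Ratₖ; 𝔽₂)` for `k = 2^(r+1) − 1`).  Then `(π_5 ⊗ id)(ψ_R(x))` equals the stated
nonzero elementary tensor, i.e. `5 ∈ S(x)` (the products over `3 ≤ j ≤ r` are empty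
when `r = 2`). -/
theorem psiR_dim_five_component_nonzero (r : ℕ) (hr : 2 ≤ r)
    (Q : P →ₗ[F2] P) (hQ : IsQ Q)
    (ψ : P →ₐ[F2] P ⊗[F2] P) (hψ : IsPsiR Q ψ)
    (π : ℕ → P →ₗ[F2] P) (hπ : IsPi dR π)
    (x : P) (hx : x = ∏ j ∈ Finset.range (r + 1), X (j + 1)) :
    TensorProduct.map (π 5) (LinearMap.id : P →ₗ[F2] P) (ψ x) =
      ((X 0) ^ 2 * (X 1) ^ 5 * ∏ j ∈ Finset.Icc 3 r, (X 0) ^ (2 ^ j)) ⊗ₜ[F2]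
        (((X 0) ^ 3 * (X 2) ^ 2 + X 0 * (X 1) ^ 6) * ∏ j ∈ Finset.Icc 3 r, X (j + 1)) ∧
    (((X 0) ^ 2 * (X 1) ^ 5 * ∏ j ∈ Finset.Icc 3 r, (X 0) ^ (2 ^ j)) ⊗ₜ[F2]
        (((X 0) ^ 3 * (X 2) ^ 2 + X 0 * (X 1) ^ 6) * ∏ j ∈ Finset.Icc 3 r, X (j + 1)) : P ⊗[F2] P) ≠ 0 := by
  refine ⟨?_, Stmt17Aux.nonzero_part r⟩
  rw [hx]
  exact Stmt17Aux.main_eq hQ hψ hπ r hr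
end
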